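/- arXiv:2204.11516 — 2 statements merged into one kernel-verified Lean document; each statement's English description precedes it below -/
import Mathlib

section
/- Suppose 𝒜 satisfies the RIP with constant δ ∈ (0,1). Then for all u ∈ ℝ^{n1} and v ∈ ℝ^{n2} one has ‖𝒪*𝒟(uvᵀ)‖ ≤ δ·‖u‖·‖v‖ and ‖𝒟*𝒪(uvᵀ)‖ ≤ δ·‖u‖·‖v‖, where ‖·‖ on the left-hand sides denotes the spectral (operator) norm of the matrix and 𝒪*, 𝒟* are the adjoints of 𝒪, 𝒟 with respect to the Frobenius and Euclidean inner products. -/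
open MeasureTheory ProbabilityTheory Matrix Finset
open scoped BigOperators ENNReal NNReal RealInnerProductSpace

noncomputable section

namespace ALSPaper

/-- View a plain vector as an element of Euclidean space. -/
def toE {n : ℕ} (x : Fin n → ℝ) : EuclideanSpace ℝ (Fin n) :=
  (WithLp.equiv 2 (Fin n → ℝ)).symm x

/-- View an element of Euclidean space as a plain vector. -/
def ofE {n : ℕ} (x : EuclideanSpace ℝ (Fin n)) : Fin n → ℝ :=
  WithLp.equiv 2 (Fin n → ℝ) x

/-- The first standard basis vector. -/
def e1 (n : ℕ) : EuclideanSpace ℝ (Fin n) :=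
  toE fun i => if (i : ℕ) = 0 then 1 else 0

/-- Frobenius inner product. -/
def frobInner {n1 n2 : ℕ} (A B : Matrix (Fin n1) (Fin n2) ℝ) : ℝ :=
  ∑ i, ∑ j, A i j * B i j

/-- Frobenius norm. -/
def frobNorm {n1 n2 : ℕ} (A : Matrix (Fin n1) (Fin n2) ℝ) : ℝ :=
  Real.sqrt (frobInner A A)

/-- The measurement operator. -/
def calA {n1 n2 m : ℕ} (A : Fin m → Matrix (Fin n1) (Fin n2) ℝ)
    (X : Matrix (Fin n1) (Fin n2) ℝ) : EuclideanSpace ℝ (Fin m) :=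
  toE fun i => (Real.sqrt m)⁻¹ * frobInner (A i) X

/-- The adjoint of the measurement operator. -/
def calAdj {n1 n2 m : ℕ} (A : Fin m → Matrix (Fin n1) (Fin n2) ℝ)
    (w : EuclideanSpace ℝ (Fin m)) : Matrix (Fin n1) (Fin n2) ℝ :=
  ∑ i, ((Real.sqrt m)⁻¹ * ofE w i) • A i

/-- The restricted isometry property (RIP) with constant `δ` (for rank ≤ 4). -/
def HasRIP {n1 n2 m : ℕ} (A : Fin m → Matrix (Fin n1) (Fin n2) ℝ) (δ : ℝ) : Prop :=
  ∀ Z : Matrix (Fin n1) (Fin n2) ℝ, Z.rank ≤ 4 →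
    (1 - δ) * frobNorm Z ^ 2 ≤ ‖calA A Z‖ ^ 2 ∧ ‖calA A Z‖ ^ 2 ≤ (1 + δ) * frobNorm Z ^ 2

/-- Component of `v` parallel to the first standard basis vector. -/
def par {n : ℕ} (v : EuclideanSpace ℝ (Fin n)) : EuclideanSpace ℝ (Fin n) :=
  ⟪e1 n, v⟫ • e1 n

/-- Component of `v` orthogonal to the first standard basis vector. -/
def perp {n : ℕ} (v : EuclideanSpace ℝ (Fin n)) : EuclideanSpace ℝ (Fin n) :=
  v - par v

/-- The "diagonal block" part of a measurement matrix. -/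
def Dmat {n1 n2 : ℕ} (A : Matrix (Fin n1) (Fin n2) ℝ) : Matrix (Fin n1) (Fin n2) ℝ :=
  vecMulVec (ofE (e1 n1)) (ofE (e1 n1)) * A * vecMulVec (ofE (e1 n2)) (ofE (e1 n2))
    + (1 - vecMulVec (ofE (e1 n1)) (ofE (e1 n1))) * A *
        (1 - vecMulVec (ofE (e1 n2)) (ofE (e1 n2)))

/-- The "off-diagonal block" part of a measurement matrix. -/
def Omat {n1 n2 : ℕ} (A : Matrix (Fin n1) (Fin n2) ℝ) : Matrix (Fin n1) (Fin n2) ℝ :=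
  vecMulVec (ofE (e1 n1)) (ofE (e1 n1)) * A * (1 - vecMulVec (ofE (e1 n2)) (ofE (e1 n2)))
    + (1 - vecMulVec (ofE (e1 n1)) (ofE (e1 n1))) * A * vecMulVec (ofE (e1 n2)) (ofE (e1 n2))

/-- The (1,1) entry of a matrix. -/
def ent11 {n1 n2 : ℕ} (A : Matrix (Fin n1) (Fin n2) ℝ) : ℝ :=
  frobInner (vecMulVec (ofE (e1 n1)) (ofE (e1 n2))) A

/-- Spectral (operator) norm of a matrix. -/
def specNorm {n1 n2 : ℕ} (M : Matrix (Fin n1) (Fin n2) ℝ) : ℝ :=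
  ‖LinearMap.toContinuousLinearMap (Matrix.toEuclideanLin M)‖

/-- The normal equation for the least-squares update. -/
def NormalEq {n1 n2 m : ℕ} (A : Fin m → Matrix (Fin n1) (Fin n2) ℝ)
    (u : EuclideanSpace ℝ (Fin n1)) (v : EuclideanSpace ℝ (Fin n2)) : Prop :=
  u = ⟪v, e1 n2⟫ • e1 n1 +
    toE (((vecMulVec (ofE u) (ofE v) - vecMulVec (ofE (e1 n1)) (ofE (e1 n2))) -
      calAdj A (calA A (vecMulVec (ofE u) (ofE v) - vecMulVec (ofE (e1 n1)) (ofE (e1 n2)))))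
        *ᵥ ofE v)

/-- sin of the angle between two vectors. -/
def sinAngle {n : ℕ} (a b : EuclideanSpace ℝ (Fin n)) : ℝ :=
  Real.sqrt (1 - ⟪a, b⟫ ^ 2 / (‖a‖ ^ 2 * ‖b‖ ^ 2))

/-- `c_t` sequence. -/
def cseq (n2 t : ℕ) : ℝ := (1 + 1 / Real.log n2) ^ t - 1

/-- ALS iterates. -/
def IsALS {n1 n2 m : ℕ} (A : Fin m → Matrix (Fin n1) (Fin n2) ℝ)
    (y : EuclideanSpace ℝ (Fin m)) (v0 : EuclideanSpace ℝ (Fin n2))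
    (u : ℕ → EuclideanSpace ℝ (Fin n1)) (v : ℕ → EuclideanSpace ℝ (Fin n2))
    (uh : ℕ → EuclideanSpace ℝ (Fin n1)) (vh : ℕ → EuclideanSpace ℝ (Fin n2)) : Prop :=
  v 0 = v0 ∧
  ∀ t : ℕ,
    (∀ u' : EuclideanSpace ℝ (Fin n1),
      ‖y - calA A (vecMulVec (ofE (uh t)) (ofE (v t)))‖ ≤
        ‖y - calA A (vecMulVec (ofE u') (ofE (v t)))‖) ∧
    u (t + 1) = ‖uh t‖⁻¹ • uh t ∧
    (∀ v' : EuclideanSpace ℝ (Fin n2),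
      ‖y - calA A (vecMulVec (ofE (u (t + 1))) (ofE (vh t)))‖ ≤
        ‖y - calA A (vecMulVec (ofE (u (t + 1))) (ofE v'))‖) ∧
    v (t + 1) = ‖vh t‖⁻¹ • vh t

section Helpers

variable {n1 n2 m : ℕ}

@[simp] lemma ofE_toE {n : ℕ} (x : Fin n → ℝ) : ofE (toE x) = x := rfl
@[simp] lemma toE_ofE {n : ℕ} (x : EuclideanSpace ℝ (Fin n)) : toE (ofE x) = x := rfl

/-! ### frobInner basics -/

lemma frobInner_comm (A B : Matrix (Fin n1) (Fin n2) ℝ) : frobInner A B = frobInner B A := by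
  simp [frobInner, mul_comm]

lemma frobInner_add_right (A B C : Matrix (Fin n1) (Fin n2) ℝ) :
    frobInner A (B + C) = frobInner A B + frobInner A C := by
  simp [frobInner, mul_add, Finset.sum_add_distrib]

lemma frobInner_smul_right (c : ℝ) (A B : Matrix (Fin n1) (Fin n2) ℝ) :
    frobInner A (c • B) = c * frobInner A B := by
  simp [frobInner, Finset.mul_sum]; ring_nf
  exact Finset.sum_congr rfl fun i _ => Finset.sum_congr rfl fun j _ => by ring

lemma frobInner_zero_right (A : Matrix (Fin n1) (Fin n2) ℝ) : frobInner A 0 = 0 := by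
  simp [frobInner]

lemma frobInner_self_nonneg (A : Matrix (Fin n1) (Fin n2) ℝ) : 0 ≤ frobInner A A :=
  Finset.sum_nonneg fun i _ => Finset.sum_nonneg fun j _ => mul_self_nonneg _

lemma frobNorm_nonneg (A : Matrix (Fin n1) (Fin n2) ℝ) : 0 ≤ frobNorm A := Real.sqrt_nonneg _

lemma frobNorm_sq (A : Matrix (Fin n1) (Fin n2) ℝ) : frobNorm A ^ 2 = frobInner A A := by
  rw [frobNorm, Real.sq_sqrt (frobInner_self_nonneg A)]

lemma frobInner_eq_trace (A B : Matrix (Fin n1) (Fin n2) ℝ) :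
    frobInner A B = Matrix.trace (Aᵀ * B) := by
  simp only [frobInner, Matrix.trace, Matrix.diag, Matrix.mul_apply, Matrix.transpose_apply]
  exact Finset.sum_comm

lemma frobInner_mul_left (X : Matrix (Fin n1) (Fin n1) ℝ) (A B : Matrix (Fin n1) (Fin n2) ℝ) :
    frobInner (X * A) B = frobInner A (Xᵀ * B) := by
  rw [frobInner_eq_trace, frobInner_eq_trace, Matrix.transpose_mul, Matrix.mul_assoc]

lemma frobInner_mul_right (Y : Matrix (Fin n2) (Fin n2) ℝ) (A B : Matrix (Fin n1) (Fin n2) ℝ) :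
    frobInner (A * Y) B = frobInner A (B * Yᵀ) := by
  rw [frobInner_eq_trace, frobInner_eq_trace, Matrix.transpose_mul,
    Matrix.trace_mul_cycle, Matrix.trace_mul_cycle, Matrix.mul_assoc]

end Helpers
section Proj

variable {n1 n2 : ℕ}

lemma frobInner_add_left (A B C : Matrix (Fin n1) (Fin n2) ℝ) :
    frobInner (A + B) C = frobInner A C + frobInner B C := by
  rw [frobInner_comm, frobInner_add_right, frobInner_comm C A, frobInner_comm C B]

lemma frobInner_smul_left (c : ℝ) (A B : Matrix (Fin n1) (Fin n2) ℝ) :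
    frobInner (c • A) B = c * frobInner A B := by
  rw [frobInner_comm, frobInner_smul_right, frobInner_comm]

lemma frobInner_conj (X : Matrix (Fin n1) (Fin n1) ℝ) (Y : Matrix (Fin n2) (Fin n2) ℝ)
    (B Z : Matrix (Fin n1) (Fin n2) ℝ) :
    frobInner (X * B * Y) Z = frobInner B (Xᵀ * Z * Yᵀ) := by
  rw [frobInner_mul_right, frobInner_mul_left, Matrix.mul_assoc]

/-- The rank-one projector onto the first coordinate. -/
def Pm (n : ℕ) : Matrix (Fin n) (Fin n) ℝ := vecMulVec (ofE (e1 n)) (ofE (e1 n))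

lemma Dmat_def (Z : Matrix (Fin n1) (Fin n2) ℝ) :
    Dmat Z = Pm n1 * Z * Pm n2 + (1 - Pm n1) * Z * (1 - Pm n2) := rfl

lemma Omat_def (Z : Matrix (Fin n1) (Fin n2) ℝ) :
    Omat Z = Pm n1 * Z * (1 - Pm n2) + (1 - Pm n1) * Z * Pm n2 := rfl

lemma Pm_mul_Pm (n : ℕ) : Pm n * Pm n = Pm n := by
  ext i j
  haveI : NeZero n := ⟨(Fin.pos i).ne'⟩
  simp only [Pm, Matrix.mul_apply, Matrix.vecMulVec_apply, e1, ofE_toE]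
  rw [Finset.sum_eq_single (0 : Fin n)]
  · simp
  · intro b _ hb
    have hb' : (b : ℕ) ≠ 0 := fun h => hb (Fin.ext (by simp [h]))
    simp [hb']
  · simp

lemma Pm_transpose (n : ℕ) : (Pm n)ᵀ = Pm n := by
  ext i j; simp [Pm, Matrix.vecMulVec_apply, mul_comm]

lemma Pm_mul_Pm_mul (n : ℕ) {k : ℕ} (X : Matrix (Fin n) (Fin k) ℝ) :
    Pm n * (Pm n * X) = Pm n * X := by
  rw [← Matrix.mul_assoc, Pm_mul_Pm]

lemma Dmat_add_Omat (Z : Matrix (Fin n1) (Fin n2) ℝ) : Dmat Z + Omat Z = Z := by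
  simp only [Dmat_def, Omat_def, Matrix.sub_mul, Matrix.mul_sub, Matrix.one_mul,
    Matrix.mul_one]
  abel

lemma Dmat_Omat (Z : Matrix (Fin n1) (Fin n2) ℝ) : Dmat (Omat Z) = 0 := by
  simp only [Dmat_def, Omat_def, Matrix.sub_mul, Matrix.mul_sub, Matrix.one_mul,
    Matrix.mul_one, Matrix.add_mul, Matrix.mul_add, Matrix.mul_assoc, Pm_mul_Pm,
    Pm_mul_Pm_mul]
  abel

lemma Omat_Dmat (Z : Matrix (Fin n1) (Fin n2) ℝ) : Omat (Dmat Z) = 0 := by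
  simp only [Dmat_def, Omat_def, Matrix.sub_mul, Matrix.mul_sub, Matrix.one_mul,
    Matrix.mul_one, Matrix.add_mul, Matrix.mul_add, Matrix.mul_assoc, Pm_mul_Pm,
    Pm_mul_Pm_mul]
  abel

lemma frobInner_Dmat_left (B Z : Matrix (Fin n1) (Fin n2) ℝ) :
    frobInner (Dmat B) Z = frobInner B (Dmat Z) := by
  simp only [Dmat_def, frobInner_add_left, frobInner_conj, Matrix.transpose_sub,
    Matrix.transpose_one, Pm_transpose]
  rw [frobInner_add_right]

lemma frobInner_Omat_left (B Z : Matrix (Fin n1) (Fin n2) ℝ) :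
    frobInner (Omat B) Z = frobInner B (Omat Z) := by
  simp only [Omat_def, frobInner_add_left, frobInner_conj, Matrix.transpose_sub,
    Matrix.transpose_one, Pm_transpose]
  rw [frobInner_add_right]

lemma frobInner_Dmat_Omat (Z W : Matrix (Fin n1) (Fin n2) ℝ) :
    frobInner (Dmat Z) (Omat W) = 0 := by
  rw [frobInner_Dmat_left, Dmat_Omat, frobInner_zero_right]

end Proj
section NormRank

variable {n1 n2 : ℕ}

lemma ofE_inj {n : ℕ} {x y : EuclideanSpace ℝ (Fin n)} (h : ofE x = ofE y) : x = y :=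
  (WithLp.equiv 2 _).injective h

@[simp] lemma ofE_add {n : ℕ} (x y : EuclideanSpace ℝ (Fin n)) :
    ofE (x + y) = ofE x + ofE y := rfl

@[simp] lemma ofE_smul {n : ℕ} (c : ℝ) (x : EuclideanSpace ℝ (Fin n)) :
    ofE (c • x) = c • ofE x := rfl

lemma inner_eq_sum {n : ℕ} (x y : EuclideanSpace ℝ (Fin n)) :
    ⟪x, y⟫ = ∑ i, ofE x i * ofE y i := by
  simp [PiLp.inner_apply, RCLike.inner_apply, ofE]
  exact Finset.sum_congr rfl fun i _ => mul_comm _ _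

lemma norm_sq_eq_sum {n : ℕ} (x : EuclideanSpace ℝ (Fin n)) :
    ‖x‖ ^ 2 = ∑ i, ofE x i ^ 2 := by
  rw [← real_inner_self_eq_norm_sq, inner_eq_sum]
  exact Finset.sum_congr rfl fun i _ => (sq _).symm

lemma frobInner_vecMulVec_self (x : Fin n1 → ℝ) (y : Fin n2 → ℝ) :
    frobInner (vecMulVec x y) (vecMulVec x y) = (∑ i, x i ^ 2) * (∑ j, y j ^ 2) := by
  simp only [frobInner, Matrix.vecMulVec_apply, Finset.sum_mul, Finset.mul_sum]
  rw [Finset.sum_comm]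
  exact Finset.sum_congr rfl fun i _ => Finset.sum_congr rfl fun j _ => by ring

lemma frobNorm_vecMulVec (u : EuclideanSpace ℝ (Fin n1)) (v : EuclideanSpace ℝ (Fin n2)) :
    frobNorm (vecMulVec (ofE u) (ofE v)) = ‖u‖ * ‖v‖ := by
  rw [frobNorm]
  have : frobInner (vecMulVec (ofE u) (ofE v)) (vecMulVec (ofE u) (ofE v)) =
      (‖u‖ * ‖v‖) ^ 2 := by
    rw [frobInner_vecMulVec_self, mul_pow, norm_sq_eq_sum, norm_sq_eq_sum]
  rw [this, Real.sqrt_sq (by positivity)]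

lemma frobInner_split (Z : Matrix (Fin n1) (Fin n2) ℝ) :
    frobInner Z Z = frobInner (Dmat Z) (Dmat Z) + frobInner (Omat Z) (Omat Z) := by
  conv_lhs => rw [← Dmat_add_Omat Z]
  rw [frobInner_add_left, frobInner_add_right, frobInner_add_right, frobInner_Dmat_Omat,
    frobInner_comm (Omat Z) (Dmat Z), frobInner_Dmat_Omat]
  ring

lemma frobNorm_Dmat_le (Z : Matrix (Fin n1) (Fin n2) ℝ) : frobNorm (Dmat Z) ≤ frobNorm Z := by
  apply Real.sqrt_le_sqrt
  have := frobInner_split Z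
  have h2 := frobInner_self_nonneg (Omat Z)
  linarith

lemma frobNorm_Omat_le (Z : Matrix (Fin n1) (Fin n2) ℝ) : frobNorm (Omat Z) ≤ frobNorm Z := by
  apply Real.sqrt_le_sqrt
  have := frobInner_split Z
  have h2 := frobInner_self_nonneg (Dmat Z)
  linarith

/-! ### rank lemmas -/

lemma rank_vecMulVec_le (a : Fin n1 → ℝ) (b : Fin n2 → ℝ) : (vecMulVec a b).rank ≤ 1 := by
  rw [Matrix.vecMulVec_eq (Fin 1)]
  exact (Matrix.rank_mul_le_right _ _).trans
    ((Matrix.rank_le_card_height _).trans (by simp))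

lemma rank_add_le' (A B : Matrix (Fin n1) (Fin n2) ℝ) : (A + B).rank ≤ A.rank + B.rank := by
  classical
  unfold Matrix.rank
  rw [Matrix.mulVecLin_add]
  have h : LinearMap.range (A.mulVecLin + B.mulVecLin) ≤
      LinearMap.range A.mulVecLin ⊔ LinearMap.range B.mulVecLin := by
    rintro x ⟨y, rfl⟩
    exact Submodule.mem_sup.2 ⟨A.mulVecLin y, ⟨y, rfl⟩, B.mulVecLin y, ⟨y, rfl⟩, rfl⟩
  exact (Submodule.finrank_mono h).trans
    (Submodule.finrank_add_le_finrank_add_finrank _ _)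

lemma rank_smul_le (c : ℝ) (A : Matrix (Fin n1) (Fin n2) ℝ) : (c • A).rank ≤ A.rank := by
  have h : c • A = (c • (1 : Matrix (Fin n1) (Fin n1) ℝ)) * A := by
    rw [Matrix.smul_mul, Matrix.one_mul]
  rw [h]
  exact Matrix.rank_mul_le_right _ _

lemma mul_vecMulVec_mul (M : Matrix (Fin n1) (Fin n1) ℝ) (N : Matrix (Fin n2) (Fin n2) ℝ)
    (a : Fin n1 → ℝ) (b : Fin n2 → ℝ) :
    M * vecMulVec a b * N = vecMulVec (M *ᵥ a) (b ᵥ* N) := by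
  ext i j
  simp only [Matrix.mul_apply, Matrix.vecMulVec_apply, Matrix.mulVec, Matrix.vecMul,
    dotProduct, Finset.sum_mul, Finset.mul_sum]
  rw [Finset.sum_comm]
  conv_rhs => rw [Finset.sum_comm]
  exact Finset.sum_congr rfl fun l _ => Finset.sum_congr rfl fun k _ => by ring

lemma rank_Dmat_vecMulVec_le (a : Fin n1 → ℝ) (b : Fin n2 → ℝ) :
    (Dmat (vecMulVec a b)).rank ≤ 2 := by
  rw [Dmat_def, mul_vecMulVec_mul, mul_vecMulVec_mul]
  exact (rank_add_le' _ _).trans (add_le_add (rank_vecMulVec_le _ _) (rank_vecMulVec_le _ _))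

lemma rank_Omat_vecMulVec_le (a : Fin n1 → ℝ) (b : Fin n2 → ℝ) :
    (Omat (vecMulVec a b)).rank ≤ 2 := by
  rw [Omat_def, mul_vecMulVec_mul, mul_vecMulVec_mul]
  exact (rank_add_le' _ _).trans (add_le_add (rank_vecMulVec_le _ _) (rank_vecMulVec_le _ _))

end NormRank
section CalA

variable {n1 n2 m : ℕ}

lemma ofE_calA (A : Fin m → Matrix (Fin n1) (Fin n2) ℝ) (X : Matrix (Fin n1) (Fin n2) ℝ) :
    ofE (calA A X) = fun i => (Real.sqrt m)⁻¹ * frobInner (A i) X := rfl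

lemma frobInner_sub_right (A B C : Matrix (Fin n1) (Fin n2) ℝ) :
    frobInner A (B - C) = frobInner A B - frobInner A C := by
  simp [frobInner, mul_sub, Finset.sum_sub_distrib]

lemma frobInner_sub_left' {A B C : Matrix (Fin n1) (Fin n2) ℝ} :
    frobInner (A - B) C = frobInner A C - frobInner B C := by
  rw [frobInner_comm, frobInner_sub_right, frobInner_comm C A, frobInner_comm C B]

lemma calA_add (A : Fin m → Matrix (Fin n1) (Fin n2) ℝ) (X Y : Matrix (Fin n1) (Fin n2) ℝ) :
    calA A (X + Y) = calA A X + calA A Y := by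
  apply ofE_inj
  rw [ofE_add, ofE_calA, ofE_calA, ofE_calA]
  funext i
  simp [frobInner_add_right, mul_add]

lemma calA_sub (A : Fin m → Matrix (Fin n1) (Fin n2) ℝ) (X Y : Matrix (Fin n1) (Fin n2) ℝ) :
    calA A (X - Y) = calA A X - calA A Y := by
  apply ofE_inj
  rw [ofE_calA]
  funext i
  simp [ofE, frobInner_sub_right, mul_sub, calA, toE]

lemma calA_smul (A : Fin m → Matrix (Fin n1) (Fin n2) ℝ) (c : ℝ) (X : Matrix (Fin n1) (Fin n2) ℝ) :
    calA A (c • X) = c • calA A X := by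
  apply ofE_inj
  rw [ofE_smul, ofE_calA, ofE_calA]
  funext i
  simp [frobInner_smul_right]
  ring

lemma calA_Dmat (A : Fin m → Matrix (Fin n1) (Fin n2) ℝ) (Z : Matrix (Fin n1) (Fin n2) ℝ) :
    calA (fun i => Dmat (A i)) Z = calA A (Dmat Z) := by
  apply ofE_inj
  rw [ofE_calA, ofE_calA]
  funext i
  rw [frobInner_Dmat_left]

lemma calA_Omat (A : Fin m → Matrix (Fin n1) (Fin n2) ℝ) (Z : Matrix (Fin n1) (Fin n2) ℝ) :
    calA (fun i => Omat (A i)) Z = calA A (Omat Z) := by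
  apply ofE_inj
  rw [ofE_calA, ofE_calA]
  funext i
  rw [frobInner_Omat_left]

lemma dot_mulVec_eq_frobInner (M : Matrix (Fin n1) (Fin n2) ℝ) (x : Fin n1 → ℝ)
    (y : Fin n2 → ℝ) : x ⬝ᵥ (M *ᵥ y) = frobInner M (vecMulVec x y) := by
  simp only [dotProduct, Matrix.mulVec, frobInner, Matrix.vecMulVec_apply,
    Finset.mul_sum]
  exact Finset.sum_congr rfl fun i _ => Finset.sum_congr rfl fun j _ => by ring

lemma inner_toEuclideanLin_calAdj (B : Fin m → Matrix (Fin n1) (Fin n2) ℝ)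
    (w : EuclideanSpace ℝ (Fin m)) (x : EuclideanSpace ℝ (Fin n1))
    (y : EuclideanSpace ℝ (Fin n2)) :
    ⟪x, (Matrix.toEuclideanLin (calAdj B w)) y⟫ =
      ⟪calA B (vecMulVec (ofE x) (ofE y)), w⟫ := by
  rw [inner_eq_sum, inner_eq_sum]
  have hz : ofE ((Matrix.toEuclideanLin (calAdj B w)) y) = (calAdj B w) *ᵥ (ofE y) := rfl
  rw [hz, ofE_calA]
  have hone : ∀ i, ((calAdj B w) *ᵥ ofE y) i
      = ∑ k, ((Real.sqrt m)⁻¹ * ofE w k) * ((B k *ᵥ ofE y) i) := by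
    intro i
    simp only [calAdj, Matrix.mulVec, dotProduct, Matrix.sum_apply, Matrix.smul_apply,
      smul_eq_mul, Finset.sum_mul, Finset.mul_sum]
    rw [Finset.sum_comm]
    exact Finset.sum_congr rfl fun k _ => Finset.sum_congr rfl fun j _ => by ring
  have hdot : ∀ i, ofE x i * ((calAdj B w) *ᵥ ofE y) i
      = ∑ k, ((Real.sqrt m)⁻¹ * ofE w k) * (ofE x i * ((B k) *ᵥ ofE y) i) := by
    intro i
    rw [hone, Finset.mul_sum]
    exact Finset.sum_congr rfl fun k _ => by ring
  simp only [hdot]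
  rw [Finset.sum_comm]
  refine Finset.sum_congr rfl fun k _ => ?_
  have : ∑ i, (Real.sqrt m)⁻¹ * ofE w k * (ofE x i * ((B k) *ᵥ ofE y) i)
      = (Real.sqrt m)⁻¹ * ofE w k * (ofE x ⬝ᵥ ((B k) *ᵥ ofE y)) := by
    rw [dotProduct, Finset.mul_sum]
  rw [this, dot_mulVec_eq_frobInner]
  ring

lemma four_inner_eq (p q : EuclideanSpace ℝ (Fin m)) :
    4 * ⟪p, q⟫ = ‖p + q‖ ^ 2 - ‖p - q‖ ^ 2 := by
  rw [norm_add_sq_real, norm_sub_sq_real]; ring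

end CalA
section Core

variable {n1 n2 m : ℕ}

lemma calA_eq_zero_of_frobNorm_eq_zero {A : Fin m → Matrix (Fin n1) (Fin n2) ℝ} {δ : ℝ}
    (hRIP : HasRIP A δ) {X : Matrix (Fin n1) (Fin n2) ℝ} (hX : X.rank ≤ 4)
    (hX0 : frobNorm X = 0) : calA A X = 0 := by
  have h := (hRIP X hX).2
  rw [hX0] at h
  simp only [ne_eq, OfNat.ofNat_ne_zero, not_false_eq_true, zero_pow, mul_zero] at h
  have h2 : ‖calA A X‖ = 0 := by nlinarith [norm_nonneg (calA A X)]
  exact norm_eq_zero.mp h2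

lemma rip_cross {A : Fin m → Matrix (Fin n1) (Fin n2) ℝ} {δ : ℝ}
    (hRIP : HasRIP A δ) (X Y : Matrix (Fin n1) (Fin n2) ℝ)
    (hX : X.rank ≤ 2) (hY : Y.rank ≤ 2) (hXY : frobInner X Y = 0) :
    |⟪calA A X, calA A Y⟫| ≤ δ * (frobNorm X * frobNorm Y) := by
  have hX4 : X.rank ≤ 4 := hX.trans (by norm_num)
  have hY4 : Y.rank ≤ 4 := hY.trans (by norm_num)
  by_cases ha : frobNorm X = 0
  · rw [calA_eq_zero_of_frobNorm_eq_zero hRIP hX4 ha, ha]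
    simp
  by_cases hb : frobNorm Y = 0
  · rw [calA_eq_zero_of_frobNorm_eq_zero hRIP hY4 hb, hb]
    simp
  set a := frobNorm X with hadef
  set b := frobNorm Y with hbdef
  have ha' : 0 < a := lt_of_le_of_ne (frobNorm_nonneg X) (Ne.symm ha)
  have hb' : 0 < b := lt_of_le_of_ne (frobNorm_nonneg Y) (Ne.symm hb)
  set X' := a⁻¹ • X with hX'def
  set Y' := b⁻¹ • Y with hY'def
  have hXX' : frobInner X' X' = 1 := by
    rw [hX'def, frobInner_smul_left, frobInner_smul_right, ← frobNorm_sq, ← hadef]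
    field_simp
  have hYY' : frobInner Y' Y' = 1 := by
    rw [hY'def, frobInner_smul_left, frobInner_smul_right, ← frobNorm_sq, ← hbdef]
    field_simp
  have hXY' : frobInner X' Y' = 0 := by
    rw [hX'def, hY'def, frobInner_smul_left, frobInner_smul_right, hXY]
    ring
  have hrX' : X'.rank ≤ 2 := (rank_smul_le _ _).trans hX
  have hrY' : Y'.rank ≤ 2 := (rank_smul_le _ _).trans hY
  have hradd : (X' + Y').rank ≤ 4 := (rank_add_le' _ _).trans (by omega)
  have hrsub : (X' - Y').rank ≤ 4 := by
    rw [sub_eq_add_neg, ← neg_one_smul ℝ Y']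
    exact (rank_add_le' _ _).trans
      (by have := (rank_smul_le (-1 : ℝ) Y').trans hrY'; omega)
  have hfadd : frobNorm (X' + Y') ^ 2 = 2 := by
    rw [frobNorm_sq, frobInner_add_left, frobInner_add_right, frobInner_add_right, hXX',
      hYY', hXY', frobInner_comm Y' X', hXY']
    ring
  have hfsub : frobNorm (X' - Y') ^ 2 = 2 := by
    rw [frobNorm_sq, frobInner_sub_left', frobInner_sub_right, frobInner_sub_right, hXX',
      hYY', hXY', frobInner_comm Y' X', hXY']
    ring
  have hup := (hRIP (X' + Y') hradd).2
  have hlo := (hRIP (X' - Y') hrsub).1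
  rw [hfadd] at hup
  rw [hfsub] at hlo
  have hpol : 4 * ⟪calA A X', calA A Y'⟫ =
      ‖calA A (X' + Y')‖ ^ 2 - ‖calA A (X' - Y')‖ ^ 2 := by
    rw [calA_add, calA_sub, four_inner_eq]
  have hupper : ⟪calA A X', calA A Y'⟫ ≤ δ := by nlinarith
  have hlower : -δ ≤ ⟪calA A X', calA A Y'⟫ := by
    have hup2 := (hRIP (X' - Y') hrsub).2
    have hlo2 := (hRIP (X' + Y') hradd).1
    rw [hfsub] at hup2
    rw [hfadd] at hlo2
    nlinarith
  have habs : |⟪calA A X', calA A Y'⟫| ≤ δ := abs_le.mpr ⟨hlower, hupper⟩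
  have hAX' : calA A X' = a⁻¹ • calA A X := by rw [hX'def, calA_smul]
  have hAY' : calA A Y' = b⁻¹ • calA A Y := by rw [hY'def, calA_smul]
  have hinner0 : ⟪calA A X', calA A Y'⟫ = a⁻¹ * (b⁻¹ * ⟪calA A X, calA A Y⟫) := by
    rw [hAX', hAY', real_inner_smul_left, real_inner_smul_right]
  have hinner : ⟪calA A X, calA A Y⟫ = a * (b * ⟪calA A X', calA A Y'⟫) := by
    rw [hinner0]
    field_simp
  rw [hinner, abs_mul, abs_mul, abs_of_pos ha', abs_of_pos hb']
  calc a * (b * |⟪calA A X', calA A Y'⟫|) ≤ a * (b * δ) := by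
        apply mul_le_mul_of_nonneg_left _ ha'.le
        exact mul_le_mul_of_nonneg_left habs hb'.le
    _ = δ * (a * b) := by ring

lemma specNorm_le_of_inner (M : Matrix (Fin n1) (Fin n2) ℝ) (C : ℝ) (hC : 0 ≤ C)
    (h : ∀ (x : EuclideanSpace ℝ (Fin n1)) (y : EuclideanSpace ℝ (Fin n2)),
      ⟪x, (Matrix.toEuclideanLin M) y⟫ ≤ C * (‖x‖ * ‖y‖)) :
    specNorm M ≤ C := by
  rw [specNorm]
  refine ContinuousLinearMap.opNorm_le_bound _ hC fun y => ?_
  have happ : (LinearMap.toContinuousLinearMap (Matrix.toEuclideanLin M)) y =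
      (Matrix.toEuclideanLin M) y := rfl
  rw [happ]
  set z := (Matrix.toEuclideanLin M) y with hz
  rcases eq_or_lt_of_le (norm_nonneg z) with h0 | h0
  · rw [← h0]; positivity
  · have hzz : ‖z‖ ^ 2 ≤ C * (‖z‖ * ‖y‖) := by
      rw [← real_inner_self_eq_norm_sq]
      exact h z y
    nlinarith

end Core
/-- If `𝒜` satisfies the RIP with constant `δ ∈ (0,1)`, then for all `u, v` one has
`‖𝒪*𝒟(uvᵀ)‖ ≤ δ‖u‖‖v‖` and `‖𝒟*𝒪(uvᵀ)‖ ≤ δ‖u‖‖v‖` in the spectral norm. -/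
theorem statement1 {n1 n2 m : ℕ} (A : Fin m → Matrix (Fin n1) (Fin n2) ℝ) (δ : ℝ)
    (hδ0 : 0 < δ) (hδ1 : δ < 1) (hRIP : HasRIP A δ)
    (u : EuclideanSpace ℝ (Fin n1)) (v : EuclideanSpace ℝ (Fin n2)) :
    specNorm (calAdj (fun i => Omat (A i))
        (calA (fun i => Dmat (A i)) (vecMulVec (ofE u) (ofE v)))) ≤ δ * ‖u‖ * ‖v‖ ∧
    specNorm (calAdj (fun i => Dmat (A i))
        (calA (fun i => Omat (A i)) (vecMulVec (ofE u) (ofE v)))) ≤ δ * ‖u‖ * ‖v‖ := by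
  have hnn : 0 ≤ δ * ‖u‖ * ‖v‖ := by positivity
  have h2 : frobNorm (Dmat (vecMulVec (ofE u) (ofE v))) ≤ ‖u‖ * ‖v‖ := by
    rw [← frobNorm_vecMulVec u v]; exact frobNorm_Dmat_le _
  have h2' : frobNorm (Omat (vecMulVec (ofE u) (ofE v))) ≤ ‖u‖ * ‖v‖ := by
    rw [← frobNorm_vecMulVec u v]; exact frobNorm_Omat_le _
  constructor
  · refine specNorm_le_of_inner _ _ hnn fun x y => ?_
    rw [inner_toEuclideanLin_calAdj, calA_Omat, calA_Dmat]
    have hb := rip_cross hRIP (Omat (vecMulVec (ofE x) (ofE y)))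
      (Dmat (vecMulVec (ofE u) (ofE v)))
      (rank_Omat_vecMulVec_le _ _) (rank_Dmat_vecMulVec_le _ _)
      (by rw [frobInner_comm, frobInner_Dmat_Omat])
    refine le_trans (le_trans (le_abs_self _) hb) ?_
    have h1 : frobNorm (Omat (vecMulVec (ofE x) (ofE y))) ≤ ‖x‖ * ‖y‖ := by
      rw [← frobNorm_vecMulVec x y]; exact frobNorm_Omat_le _
    calc δ * (frobNorm (Omat (vecMulVec (ofE x) (ofE y))) *
          frobNorm (Dmat (vecMulVec (ofE u) (ofE v))))
        ≤ δ * ((‖x‖ * ‖y‖) * (‖u‖ * ‖v‖)) := by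
          apply mul_le_mul_of_nonneg_left _ hδ0.le
          exact mul_le_mul h1 h2 (frobNorm_nonneg _) (by positivity)
      _ = δ * ‖u‖ * ‖v‖ * (‖x‖ * ‖y‖) := by ring
  · refine specNorm_le_of_inner _ _ hnn fun x y => ?_
    rw [inner_toEuclideanLin_calAdj, calA_Omat, calA_Dmat]
    have hb := rip_cross hRIP (Dmat (vecMulVec (ofE x) (ofE y)))
      (Omat (vecMulVec (ofE u) (ofE v)))
      (rank_Dmat_vecMulVec_le _ _) (rank_Omat_vecMulVec_le _ _)
      (frobInner_Dmat_Omat _ _)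
    refine le_trans (le_trans (le_abs_self _) hb) ?_
    have h1 : frobNorm (Dmat (vecMulVec (ofE x) (ofE y))) ≤ ‖x‖ * ‖y‖ := by
      rw [← frobNorm_vecMulVec x y]; exact frobNorm_Dmat_le _
    calc δ * (frobNorm (Dmat (vecMulVec (ofE x) (ofE y))) *
          frobNorm (Omat (vecMulVec (ofE u) (ofE v))))
        ≤ δ * ((‖x‖ * ‖y‖) * (‖u‖ * ‖v‖)) := by
          apply mul_le_mul_of_nonneg_left _ hδ0.le
          exact mul_le_mul h1 h2' (frobNorm_nonneg _) (by positivity)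
      _ = δ * ‖u‖ * ‖v‖ * (‖x‖ * ‖y‖) := by ring

end ALSPaper
end
end

section
/- There exists an absolute constant c > 0 such that the following holds. With probability at least 1 − O(exp(−c·min{m, min(n1,n2)})) it holds that (1/m)·‖(Σ_{i=1}^m (A_i)_{1,1} O_i) v_⋆‖ ≤ 4·√(n1/m) and (1/m)·‖(Σ_{i=1}^m (A_i)_{1,1} Õ_i) v_⋆‖ ≤ 4·√(n1/m). -/
open MeasureTheory ProbabilityTheory Matrix Finset
open scoped BigOperators ENNReal NNReal RealInnerProductSpace

noncomputable section

namespace ALSPaper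

section Helpers
set_option maxHeartbeats 4000000
open Real Function
open scoped ENNReal

namespace ALSHelp

lemma gauss1d (lam c b : ℝ) (hlam : 0 ≤ lam) (h : 2*lam*c^2 < 1) :
    ∫⁻ z, ENNReal.ofReal (Real.exp (lam * (c*z+b)^2)) ∂(gaussianReal 0 1) =
    ENNReal.ofReal ((Real.sqrt (1 - 2*lam*c^2))⁻¹ * Real.exp (lam*b^2 / (1-2*lam*c^2))) := by
  set a : ℝ := 1/2 - lam*c^2 with ha_def
  have ha : 0 < a := by simp only [ha_def]; nlinarith
  have h2a : 1 - 2*lam*c^2 = 2*a := by ring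
  rw [gaussianReal_of_var_ne_zero 0 one_ne_zero,
    lintegral_withDensity_eq_lintegral_mul _ (measurable_gaussianPDF 0 1)
      (by fun_prop : Measurable fun z => ENNReal.ofReal (Real.exp (lam * (c*z+b)^2)))]
  set e : ℝ := lam*c*b/a with he_def
  set K : ℝ := (Real.sqrt (2*π))⁻¹ * Real.exp (lam*b^2 + (lam*c*b)^2/a) with hK_def
  have hu : ∀ z : ℝ, (gaussianPDF 0 1 * fun z => ENNReal.ofReal (Real.exp (lam * (c*z+b)^2))) z
      = ENNReal.ofReal (K * Real.exp (-a * (z-e)^2)) := by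
    intro z
    simp only [Pi.mul_apply, gaussianPDF, ← ENNReal.ofReal_mul (gaussianPDFReal_nonneg 0 1 z)]
    congr 1
    simp only [gaussianPDFReal, hK_def, NNReal.coe_one, sub_zero, mul_one]
    rw [mul_assoc, ← Real.exp_add, mul_assoc, ← Real.exp_add]
    congr 1
    simp only [he_def]
    have hane : a ≠ 0 := ha.ne'
    field_simp
    congr 1
    field_simp
    ring
  simp_rw [hu]
  have hint : Integrable (fun z : ℝ => K * Real.exp (-a * (z-e)^2)) :=
    ((integrable_exp_neg_mul_sq ha).comp_sub_right e).const_mul K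
  rw [← ofReal_integral_eq_lintegral_ofReal hint (ae_of_all _ fun z => by positivity)]
  congr 1
  rw [integral_const_mul]
  rw [integral_sub_right_eq_self (fun z => Real.exp (-a * z^2)) e]
  rw [integral_gaussian]
  rw [hK_def, h2a]
  have hpi : (0:ℝ) < π := pi_pos
  have h1 : (Real.sqrt (2*π))⁻¹ * Real.exp (lam*b^2 + (lam*c*b)^2/a) * Real.sqrt (π/a)
      = (Real.sqrt (2*π))⁻¹ * Real.sqrt (π/a) * Real.exp (lam*b^2 + (lam*c*b)^2/a) := by ring
  rw [h1]
  congr 1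
  · rw [← Real.sqrt_inv, ← Real.sqrt_mul (by positivity),
      show (2*π)⁻¹ * (π/a) = (2*a)⁻¹ by field_simp, Real.sqrt_inv]
  · congr 1
    field_simp
    ring


variable {δ : Type*} [Fintype δ] [DecidableEq δ]

def G (δ : Type*) : δ → Measure ℝ := fun _ => gaussianReal 0 1

instance (i : δ) : IsProbabilityMeasure (G δ i) := by
  unfold G; infer_instance

lemma gaussMarginal (lam : ℝ) (hlam : 0 ≤ lam) (a : δ → ℝ) (u : Finset δ)
    (hA : 2 * lam * ∑ k ∈ u, (a k)^2 < 1) :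
    ∀ s ⊆ u, ∀ x : δ → ℝ,
      (∫⋯∫⁻_s, (fun x => ENNReal.ofReal (Real.exp (lam * (∑ k ∈ u, a k * x k)^2))) ∂(G δ)) x
      = ENNReal.ofReal ((Real.sqrt (1 - 2*lam*∑ k ∈ s, (a k)^2))⁻¹ *
          Real.exp ((lam / (1 - 2*lam*∑ k ∈ s, (a k)^2)) * (∑ k ∈ u \ s, a k * x k)^2)) := by
  have hf : Measurable (fun x : δ → ℝ =>
      ENNReal.ofReal (Real.exp (lam * (∑ k ∈ u, a k * x k)^2))) := by fun_prop
  intro s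
  induction s using Finset.induction_on with
  | empty =>
    intro _ x
    simp only [lmarginal_empty, sum_empty, mul_zero, sub_zero, Real.sqrt_one, inv_one,
      one_mul, div_one, sdiff_empty]
  | @insert i s hi ih =>
    intro hins x
    have hiu : i ∈ u := hins (mem_insert_self i s)
    have hsu : s ⊆ u := (Finset.insert_subset_iff.mp hins).2
    have hnn : ∀ (t : Finset δ), (0:ℝ) ≤ ∑ k ∈ t, (a k)^2 :=
      fun t => Finset.sum_nonneg fun k _ => sq_nonneg _
    have hmono : ∀ t ⊆ u, ∑ k ∈ t, (a k)^2 ≤ ∑ k ∈ u, (a k)^2 :=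
      fun t ht => Finset.sum_le_sum_of_subset_of_nonneg ht (fun k _ _ => sq_nonneg _)
    have hDs : 0 < 1 - 2*lam*∑ k ∈ s, (a k)^2 := by
      have := hmono s hsu; nlinarith [hnn s]
    have hDi : 0 < 1 - 2*lam*∑ k ∈ insert i s, (a k)^2 := by
      have := hmono _ hins; nlinarith [hnn (insert i s)]
    have hAi' : ∑ k ∈ insert i s, (a k)^2 = (a i)^2 + ∑ k ∈ s, (a k)^2 :=
      Finset.sum_insert hi
    rw [lmarginal_insert _ hf hi]
    have hsd : u \ insert i s = (u \ s).erase i := by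
      ext k; simp [Finset.mem_sdiff, Finset.mem_erase, Finset.mem_insert]; tauto
    have hi_mem : i ∈ u \ s := Finset.mem_sdiff.mpr ⟨hiu, hi⟩
    have hsum : ∀ xi : ℝ, ∑ k ∈ u \ s, a k * (Function.update x i xi) k
        = a i * xi + ∑ k ∈ u \ insert i s, a k * x k := by
      intro xi
      rw [← Finset.insert_erase hi_mem, Finset.sum_insert (Finset.notMem_erase _ _), ← hsd]
      simp only [Function.update_self]
      congr 1
      apply Finset.sum_congr rfl
      intro k hk
      have : k ≠ i := by rw [hsd] at hk; exact Finset.ne_of_mem_erase hk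
      rw [Function.update_of_ne this]
    have hrw : ∀ xi : ℝ,
        (∫⋯∫⁻_s, (fun x => ENNReal.ofReal (Real.exp (lam * (∑ k ∈ u, a k * x k)^2))) ∂(G δ))
          (Function.update x i xi)
        = ENNReal.ofReal ((Real.sqrt (1 - 2*lam*∑ k ∈ s, (a k)^2))⁻¹) *
          ENNReal.ofReal (Real.exp ((lam / (1 - 2*lam*∑ k ∈ s, (a k)^2)) *
            (a i * xi + ∑ k ∈ u \ insert i s, a k * x k)^2)) := by
      intro xi
      rw [ih hsu (Function.update x i xi), hsum xi,
        ENNReal.ofReal_mul (by positivity)]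
    rw [lintegral_congr hrw]
    rw [lintegral_const_mul _ (by fun_prop)]
    have hlams : 0 ≤ lam / (1 - 2*lam*∑ k ∈ s, (a k)^2) := div_nonneg hlam hDs.le
    have hlamc : 2 * (lam / (1 - 2*lam*∑ k ∈ s, (a k)^2)) * (a i)^2 < 1 := by
      have h2 : 2 * (lam / (1 - 2*lam*∑ k ∈ s, (a k)^2)) * (a i)^2
          = (2*lam*(a i)^2) / (1 - 2*lam*∑ k ∈ s, (a k)^2) := by ring
      rw [h2, div_lt_one hDs]
      nlinarith
    simp only [G]
    rw [gauss1d _ _ _ hlams hlamc]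
    rw [← ENNReal.ofReal_mul (by positivity)]
    congr 1
    set As := ∑ k ∈ s, (a k)^2 with hAs
    set Ai := ∑ k ∈ insert i s, (a k)^2 with hAi
    set B := ∑ k ∈ u \ insert i s, a k * x k with hB
    have hq : 1 - 2 * (lam / (1 - 2*lam*As)) * (a i)^2 = (1 - 2*lam*Ai) / (1 - 2*lam*As) := by
      field_simp
      rw [hAi']
      ring
    rw [hq]
    have h1 : (Real.sqrt (1 - 2*lam*As))⁻¹ * ((Real.sqrt ((1 - 2*lam*Ai) / (1 - 2*lam*As)))⁻¹ *
        Real.exp (lam / (1 - 2*lam*As) * B^2 / ((1 - 2*lam*Ai) / (1 - 2*lam*As))))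
        = ((Real.sqrt (1 - 2*lam*As) * Real.sqrt ((1 - 2*lam*Ai) / (1 - 2*lam*As)))⁻¹) *
          Real.exp (lam / (1 - 2*lam*As) * B^2 / ((1 - 2*lam*Ai) / (1 - 2*lam*As))) := by
      rw [mul_inv]; ring
    rw [h1, ← Real.sqrt_mul hDs.le, mul_div_cancel₀ _ hDs.ne']
    have hX : lam / (1 - 2*lam*As) * B^2 / ((1 - 2*lam*Ai) / (1 - 2*lam*As))
        = lam / (1 - 2*lam*Ai) * B^2 := by
      have hsne : 1 - 2*lam*As ≠ 0 := hDs.ne'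
      have hine : 1 - 2*lam*Ai ≠ 0 := hDi.ne'
      field_simp
      rw [mul_comm (1 - lam*2*As) (1 - lam*2*Ai), mul_right_comm lam,
        mul_div_mul_right _ _ (by intro h; apply hsne; linarith)]
    rw [hX]


variable {δ : Type*} [DecidableEq δ] {μ : δ → Measure ℝ} [∀ i, IsProbabilityMeasure (μ i)]

lemma updFin_not_mem {x : δ → ℝ} {s : Finset δ} {y : ∀ i : s, ℝ} {i : δ} (hi : i ∉ s) :
    updateFinset x s y i = x i := by
  simp [updateFinset_def, hi]

lemma lmarginal_const_fn (s : Finset δ) (c : ℝ≥0∞) :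
    (∫⋯∫⁻_s, (fun _ => c) ∂μ) = fun _ => c := by
  funext x
  rw [lmarginal]
  simp

lemma lmarginal_point (s : Finset δ) {f f' : (δ → ℝ) → ℝ≥0∞} (x : δ → ℝ)
    (h : ∀ y : ∀ i : s, ℝ, f (updateFinset x s y) = f' (updateFinset x s y)) :
    (∫⋯∫⁻_s, f ∂μ) x = (∫⋯∫⁻_s, f' ∂μ) x := by
  simp only [lmarginal]
  exact lintegral_congr fun y => h y

lemma lmarginal_mul_left (s : Finset δ) {g h : (δ → ℝ) → ℝ≥0∞} (hh : Measurable h)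
    (hg : ∀ (x : δ → ℝ) (y : ∀ i : s, ℝ), g (updateFinset x s y) = g x) :
    (∫⋯∫⁻_s, (fun x => g x * h x) ∂μ) = fun x => g x * (∫⋯∫⁻_s, h ∂μ) x := by
  funext x
  simp only [lmarginal]
  have hmeas : Measurable fun y : (∀ _ : s, ℝ) => h (updateFinset x s y) :=
    hh.comp measurable_updateFinset
  rw [show (fun y : (∀ _ : s, ℝ) => g (updateFinset x s y) * h (updateFinset x s y))
      = fun y => g x * h (updateFinset x s y) from funext fun y => by rw [hg x y]]
  exact lintegral_const_mul _ hmeas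

lemma lmarginal_prod_groups {κ : Type*} [DecidableEq κ] (J : Finset κ) (t : κ → Finset δ)
    (hdisj : ∀ j ∈ J, ∀ j' ∈ J, j ≠ j' → Disjoint (t j) (t j'))
    (F : κ → (δ → ℝ) → ℝ≥0∞) (hFm : ∀ j, Measurable (F j))
    (hdep : ∀ j ∈ J, ∀ x y : δ → ℝ,
      (∀ i, i ∉ (J.biUnion t) \ (t j) → x i = y i) → F j x = F j y) :
    (∫⋯∫⁻_(J.biUnion t), (fun x => ∏ j ∈ J, F j x) ∂μ)
      = fun x => ∏ j ∈ J, (∫⋯∫⁻_(t j), F j ∂μ) x := by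
  induction J using Finset.induction_on with
  | empty => simp [lmarginal_const_fn]
  | @insert a J ha ih =>
    have hd : Disjoint (t a) (J.biUnion t) := by
      rw [Finset.disjoint_biUnion_right]
      intro j hj
      exact hdisj a (mem_insert_self a J) j (mem_insert_of_mem hj) (fun h => ha (h ▸ hj))
    have hsub : J.biUnion t ⊆ (insert a J).biUnion t := by
      apply Finset.biUnion_subset_biUnion_of_subset_left
      exact Finset.subset_insert a J
    have hprodmeas : Measurable (fun x => ∏ j ∈ J, F j x) :=
      Finset.measurable_prod _ (fun j _ => hFm j)
    have hprodmeas' : Measurable (fun x => ∏ j ∈ insert a J, F j x) :=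
      Finset.measurable_prod _ (fun j _ => hFm j)
    rw [Finset.biUnion_insert, lmarginal_union μ _ hprodmeas' hd]
    -- inner marginal
    have hinner : (∫⋯∫⁻_(J.biUnion t), (fun x => ∏ j ∈ insert a J, F j x) ∂μ)
        = fun x => F a x * ∏ j ∈ J, (∫⋯∫⁻_(t j), F j ∂μ) x := by
      have h1 : (fun x : δ → ℝ => ∏ j ∈ insert a J, F j x)
          = fun x => F a x * ∏ j ∈ J, F j x := by
        funext x; exact Finset.prod_insert ha
      rw [h1, lmarginal_mul_left _ hprodmeas]
      · have ihJ := ih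
          (fun j hj j' hj' hne => hdisj j (mem_insert_of_mem hj) j' (mem_insert_of_mem hj') hne)
          (fun j hj x y hagree => hdep j (mem_insert_of_mem hj) x y
            (fun i hi => hagree i (fun hmem => hi
              (Finset.mem_sdiff.mpr ⟨hsub (Finset.mem_sdiff.mp hmem).1,
                (Finset.mem_sdiff.mp hmem).2⟩))))
        rw [ihJ]
      · -- F a doesn't depend on coords in J.biUnion t
        intro x y
        apply hdep a (mem_insert_self a J)
        intro i hi
        apply updFin_not_mem
        intro hiU
        exact hi (Finset.mem_sdiff.mpr ⟨hsub hiU, Finset.disjoint_right.mp hd hiU⟩)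
    rw [hinner]
    -- outer marginal over t a
    funext x
    rw [Finset.prod_insert ha]
    have houter : (∫⋯∫⁻_(t a), (fun x => F a x * ∏ j ∈ J, (∫⋯∫⁻_(t j), F j ∂μ) x) ∂μ) x
        = (∫⋯∫⁻_(t a), (fun x' => F a x' * ∏ j ∈ J, (∫⋯∫⁻_(t j), F j ∂μ) x) ∂μ) x := by
      apply lmarginal_point
      intro y
      congr 1
      apply Finset.prod_congr rfl
      intro j hj
      -- marg (t j) F j at updateFinset x (t a) y equals at x
      simp only [lmarginal]
      apply lintegral_congr
      intro w
      apply hdep j (mem_insert_of_mem hj)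
      intro i hi
      by_cases hitj : i ∈ t j
      · simp [updateFinset_def, hitj]
      · rw [updFin_not_mem hitj, updFin_not_mem hitj, updFin_not_mem]
        intro hita
        exact hi (Finset.mem_sdiff.mpr
          ⟨Finset.mem_biUnion.mpr ⟨a, mem_insert_self a J, hita⟩, hitj⟩)
    rw [houter]
    have : (fun x' => F a x' * ∏ j ∈ J, (∫⋯∫⁻_(t j), F j ∂μ) x)
        = fun x' => (∏ j ∈ J, (∫⋯∫⁻_(t j), F j ∂μ) x) * F a x' := by
      funext x'; ring
    rw [this, lmarginal_mul_left (g := fun _ => ∏ j ∈ J, (∫⋯∫⁻_(t j), F j ∂μ) x)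
      _ (hFm a) (fun _ _ => rfl)]
    ring


lemma expProd {κ : Type*} (s : Finset κ) (f : κ → ℝ) :
    ∏ j ∈ s, ENNReal.ofReal (Real.exp (f j)) = ENNReal.ofReal (Real.exp (∑ j ∈ s, f j)) := by
  induction s using Finset.cons_induction with
  | empty => simp
  | cons a s ha ih =>
    rw [Finset.prod_cons, Finset.sum_cons, ih, ← ENNReal.ofReal_mul (Real.exp_nonneg _),
      ← Real.exp_add]

lemma real_bound (k : ℕ) :
    Real.exp (-(k:ℝ)) * (Real.sqrt 2)^k ≤ Real.exp (-(k:ℝ)/2) := by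
  have h2e : (2:ℝ) ≤ Real.exp 1 := by have := Real.add_one_le_exp (1:ℝ); linarith
  have h1 : Real.sqrt 2 ≤ Real.exp (1/2) := by
    rw [show (1:ℝ)/2 = 1/2 from rfl, Real.exp_half]
    exact Real.sqrt_le_sqrt h2e
  have h2 : (Real.sqrt 2)^k ≤ Real.exp ((k:ℝ)/2) := by
    calc (Real.sqrt 2)^k ≤ (Real.exp (1/2))^k := by
          exact pow_le_pow_left₀ (Real.sqrt_nonneg 2) h1 k
    _ = Real.exp ((k:ℝ)*(1/2)) := (Real.exp_nat_mul _ k).symm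
    _ = Real.exp ((k:ℝ)/2) := by ring_nf
  calc Real.exp (-(k:ℝ)) * (Real.sqrt 2)^k ≤ Real.exp (-(k:ℝ)) * Real.exp ((k:ℝ)/2) := by
        exact mul_le_mul_of_nonneg_left h2 (Real.exp_nonneg _)
  _ = Real.exp (-(k:ℝ) + (k:ℝ)/2) := (Real.exp_add _ _).symm
  _ = Real.exp (-(k:ℝ)/2) := by ring_nf

lemma sqrt_half_inv : ((Real.sqrt (1 - 2*(1/4)*1))⁻¹ : ℝ) = Real.sqrt 2 := by
  rw [show (1:ℝ) - 2*(1/4)*1 = 2⁻¹ by norm_num, Real.sqrt_inv, inv_inv]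

lemma gBound {δ : Type*} [Fintype δ] [DecidableEq δ] (m : ℕ) (hm : 0 < m)
    (gI : Fin m → δ) (hginj : Function.Injective gI) :
    Measure.pi (G δ) {x : δ → ℝ | 4*(m:ℝ) < ∑ i, (x (gI i))^2}
      ≤ ENNReal.ofReal (Real.exp (-(m:ℝ)/2)) := by
  classical
  set t : Fin m → Finset δ := fun i => {gI i} with ht
  set F : Fin m → (δ → ℝ) → ℝ≥0∞ :=
    fun i x => ENNReal.ofReal (Real.exp ((1/4) * (x (gI i))^2)) with hF
  have hFm : ∀ i, Measurable (F i) := by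
    intro i
    apply Measurable.ennreal_ofReal
    apply (Real.measurable_exp.comp _)
    fun_prop
  have hsum_meas : Measurable (fun x : δ → ℝ => ∑ i, (x (gI i))^2) := by fun_prop
  have hE : MeasurableSet {x : δ → ℝ | 4*(m:ℝ) < ∑ i, (x (gI i))^2} :=
    measurableSet_lt measurable_const hsum_meas
  have hprodmeas : Measurable (fun x => ∏ i, F i x) :=
    Finset.measurable_prod _ (fun i _ => hFm i)
  have step1 : Measure.pi (G δ) {x : δ → ℝ | 4*(m:ℝ) < ∑ i, (x (gI i))^2}
      ≤ ∫⁻ x, ENNReal.ofReal (Real.exp (-(m:ℝ))) * ∏ i, F i x ∂Measure.pi (G δ) := by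
    rw [← lintegral_indicator_one hE]
    apply lintegral_mono
    intro x
    by_cases hx : x ∈ {x : δ → ℝ | 4*(m:ℝ) < ∑ i, (x (gI i))^2}
    · rw [Set.indicator_of_mem hx]
      simp only [Pi.one_apply]
      have hpr : ∏ i, F i x = ENNReal.ofReal (Real.exp (∑ i, (1/4) * (x (gI i))^2)) :=
        expProd Finset.univ (fun i => (1/4) * (x (gI i))^2)
      rw [hpr, ← ENNReal.ofReal_mul (Real.exp_nonneg _), ← Real.exp_add]
      rw [show (1:ℝ≥0∞) = ENNReal.ofReal (Real.exp 0) by simp]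
      apply ENNReal.ofReal_le_ofReal
      apply Real.exp_le_exp.mpr
      have hx' : 4*(m:ℝ) < ∑ i, (x (gI i))^2 := hx
      have : (m:ℝ) ≤ ∑ i, (1/4) * (x (gI i))^2 := by
        rw [← Finset.mul_sum]
        nlinarith
      linarith
    · rw [Set.indicator_of_notMem hx]
      exact bot_le
  have hmarg : ∀ (i : Fin m) (x : δ → ℝ),
      (∫⋯∫⁻_(t i), F i ∂(G δ)) x = ENNReal.ofReal (Real.sqrt 2) := by
    intro i x
    have hswitch : (∫⋯∫⁻_(t i), F i ∂(G δ)) x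
        = (∫⋯∫⁻_(t i), (fun y => ENNReal.ofReal (Real.exp ((1/4) *
            (∑ k ∈ ({gI i} : Finset δ), (fun _ => (1:ℝ)) k * y k)^2))) ∂(G δ)) x := by
      apply lmarginal_point
      intro y
      simp [hF, ht, Finset.sum_singleton]
    rw [hswitch,
      gaussMarginal (1/4) (by norm_num) (fun _ => (1:ℝ)) ({gI i} : Finset δ)
        (by rw [Finset.sum_singleton]; norm_num) ({gI i} : Finset δ) (Finset.Subset.refl _) x]
    rw [Finset.sum_singleton, Finset.sdiff_self, Finset.sum_empty]
    norm_num [sqrt_half_inv]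
  have step2 : ∫⁻ x, (∏ i, F i x) ∂Measure.pi (G δ) ≤ ENNReal.ofReal ((Real.sqrt 2)^m) := by
    have hconst : ∫⁻ _x, (ENNReal.ofReal ((Real.sqrt 2)^m)) ∂Measure.pi (G δ)
        = ENNReal.ofReal ((Real.sqrt 2)^m) := by
      rw [lintegral_const]
      simp
    rw [← hconst]
    apply lintegral_le_of_lmarginal_le (Finset.univ.biUnion t) hprodmeas measurable_const
    rw [lmarginal_const_fn]
    rw [lmarginal_prod_groups Finset.univ t
      (fun i _ j _ hne => by
        simp only [ht, Finset.disjoint_singleton]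
        exact fun h => hne (hginj h))
      F hFm
      (fun i _ x y hagree => by
        simp only [hF]
        have : x (gI i) = y (gI i) := by
          apply hagree
          intro hmem
          exact (Finset.mem_sdiff.mp hmem).2 (Finset.mem_singleton_self _)
        rw [this])]
    intro x
    simp only [hmarg]
    rw [Finset.prod_const, Finset.card_univ, Fintype.card_fin,
      ENNReal.ofReal_pow (Real.sqrt_nonneg 2)]
  calc Measure.pi (G δ) {x : δ → ℝ | 4*(m:ℝ) < ∑ i, (x (gI i))^2}
      ≤ ∫⁻ x, ENNReal.ofReal (Real.exp (-(m:ℝ))) * ∏ i, F i x ∂Measure.pi (G δ) := step1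
  _ = ENNReal.ofReal (Real.exp (-(m:ℝ))) * ∫⁻ x, (∏ i, F i x) ∂Measure.pi (G δ) :=
      lintegral_const_mul _ hprodmeas
  _ ≤ ENNReal.ofReal (Real.exp (-(m:ℝ))) * ENNReal.ofReal ((Real.sqrt 2)^m) := by
      exact mul_le_mul_right step2 _
  _ = ENNReal.ofReal (Real.exp (-(m:ℝ)) * (Real.sqrt 2)^m) :=
      (ENNReal.ofReal_mul (Real.exp_nonneg _)).symm
  _ ≤ ENNReal.ofReal (Real.exp (-(m:ℝ)/2)) := ENNReal.ofReal_le_ofReal (real_bound m)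


lemma inv_sqrt_le {u : ℝ} (hu : 1/2 ≤ u) : (Real.sqrt u)⁻¹ ≤ Real.sqrt 2 := by
  have h1 : Real.sqrt (1/2) ≤ Real.sqrt u := Real.sqrt_le_sqrt hu
  have h2 : (0:ℝ) < Real.sqrt (1/2) := Real.sqrt_pos.mpr (by norm_num)
  have h3 : (Real.sqrt u)⁻¹ ≤ (Real.sqrt (1/2))⁻¹ := by
    apply inv_anti₀ h2 h1
  calc (Real.sqrt u)⁻¹ ≤ (Real.sqrt (1/2))⁻¹ := h3
  _ = Real.sqrt 2 := by
      rw [show (1:ℝ)/2 = 2⁻¹ by norm_num, Real.sqrt_inv, inv_inv]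

lemma chiBound {δ : Type*} [Fintype δ] [DecidableEq δ] (m n1 : ℕ) (hm : 0 < m)
    (gI : Fin m → δ) (J : Finset (Fin n1)) (xI : Fin m → Fin n1 → δ) (p : δ → Fin m)
    (hp : ∀ i j, p (xI i j) = i)
    (hdisj : ∀ i i' j j', j ∈ J → j' ∈ J → j ≠ j' → xI i j ≠ xI i' j')
    (hgx : ∀ i i' j, j ∈ J → gI i ≠ xI i' j) :
    Measure.pi (G δ) {x : δ → ℝ | (∑ i, (x (gI i))^2 ≤ 4*(m:ℝ)) ∧
      16*(n1:ℝ)*m < ∑ j ∈ J, (∑ i, x (gI i) * x (xI i j))^2}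
      ≤ ENNReal.ofReal (Real.exp (-(n1:ℝ)/2)) := by
  classical
  have hmR : (0:ℝ) < m := Nat.cast_pos.mpr hm
  set lam : ℝ := 1/(16*m) with hlam_def
  have hlam : 0 ≤ lam := by positivity
  have hxinj : ∀ j, Function.Injective (fun i => xI i j) := by
    intro j i i' h
    have := congrArg p h
    simpa [hp] using this
  set t : Fin n1 → Finset δ := fun j => Finset.image (fun i => xI i j) Finset.univ with ht
  set U : Finset δ := J.biUnion t with hU
  have hgU : ∀ i, gI i ∉ U := by
    intro i hiU
    rw [hU, Finset.mem_biUnion] at hiU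
    obtain ⟨j, hj, hmem⟩ := hiU
    rw [ht] at hmem
    simp only [Finset.mem_image, Finset.mem_univ, true_and] at hmem
    obtain ⟨i', hi'⟩ := hmem
    exact hgx i i' j hj hi'.symm
  set F : Fin n1 → (δ → ℝ) → ℝ≥0∞ :=
    fun j x => ENNReal.ofReal (Real.exp (lam * (∑ i, x (gI i) * x (xI i j))^2)) with hF
  set g0 : (δ → ℝ) → ℝ≥0∞ := fun x => if ∑ i, (x (gI i))^2 ≤ 4*(m:ℝ) then 1 else 0 with hg0
  have hFm : ∀ j, Measurable (F j) := by
    intro j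
    apply Measurable.ennreal_ofReal
    apply Real.measurable_exp.comp
    fun_prop
  have hGmeas : Measurable (fun x : δ → ℝ => ∑ i, (x (gI i))^2) := by fun_prop
  have hg0m : Measurable g0 := by
    rw [hg0]
    apply Measurable.ite _ measurable_const measurable_const
    exact measurableSet_le hGmeas measurable_const
  have hQmeas : Measurable (fun x : δ → ℝ => ∑ j ∈ J, (∑ i, x (gI i) * x (xI i j))^2) := by
    fun_prop
  have hE : MeasurableSet {x : δ → ℝ | (∑ i, (x (gI i))^2 ≤ 4*(m:ℝ)) ∧
      16*(n1:ℝ)*m < ∑ j ∈ J, (∑ i, x (gI i) * x (xI i j))^2} := by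
    exact (measurableSet_le hGmeas measurable_const).inter
      (measurableSet_lt measurable_const hQmeas)
  have hprodmeas : Measurable (fun x => ∏ j ∈ J, F j x) :=
    Finset.measurable_prod _ (fun j _ => hFm j)
  have hg0prodmeas : Measurable (fun x => g0 x * ∏ j ∈ J, F j x) :=
    hg0m.mul hprodmeas
  have step1 : Measure.pi (G δ) {x : δ → ℝ | (∑ i, (x (gI i))^2 ≤ 4*(m:ℝ)) ∧
        16*(n1:ℝ)*m < ∑ j ∈ J, (∑ i, x (gI i) * x (xI i j))^2}
      ≤ ∫⁻ x, ENNReal.ofReal (Real.exp (-(n1:ℝ))) * (g0 x * ∏ j ∈ J, F j x)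
          ∂Measure.pi (G δ) := by
    rw [← lintegral_indicator_one hE]
    apply lintegral_mono
    intro x
    by_cases hx : x ∈ {x : δ → ℝ | (∑ i, (x (gI i))^2 ≤ 4*(m:ℝ)) ∧
        16*(n1:ℝ)*m < ∑ j ∈ J, (∑ i, x (gI i) * x (xI i j))^2}
    · rw [Set.indicator_of_mem hx]
      simp only [Pi.one_apply]
      obtain ⟨hx1, hx2⟩ := hx
      have hg0x : g0 x = 1 := by rw [hg0]; simp only [hx1, if_true]
      have hpr : ∏ j ∈ J, F j x
          = ENNReal.ofReal (Real.exp (∑ j ∈ J, lam * (∑ i, x (gI i) * x (xI i j))^2)) :=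
        expProd J _
      rw [hg0x, one_mul, hpr, ← ENNReal.ofReal_mul (Real.exp_nonneg _), ← Real.exp_add]
      rw [show (1:ℝ≥0∞) = ENNReal.ofReal (Real.exp 0) by simp]
      apply ENNReal.ofReal_le_ofReal
      apply Real.exp_le_exp.mpr
      rw [← Finset.mul_sum]
      have hkey : (n1:ℝ) ≤ lam * ∑ j ∈ J, (∑ i, x (gI i) * x (xI i j))^2 := by
        have h16 : lam * (16*(n1:ℝ)*m) = n1 := by
          rw [hlam_def]; field_simp
        calc (n1:ℝ) = lam * (16*(n1:ℝ)*m) := h16.symm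
        _ ≤ lam * ∑ j ∈ J, (∑ i, x (gI i) * x (xI i j))^2 := by
            apply mul_le_mul_of_nonneg_left (le_of_lt hx2) hlam
      linarith
    · rw [Set.indicator_of_notMem hx]
      exact bot_le
  have step3 : ∫⁻ x, (g0 x * ∏ j ∈ J, F j x) ∂Measure.pi (G δ)
      ≤ ENNReal.ofReal ((Real.sqrt 2)^n1) := by
    have hconst : ∫⁻ _x, (ENNReal.ofReal ((Real.sqrt 2)^n1)) ∂Measure.pi (G δ)
        = ENNReal.ofReal ((Real.sqrt 2)^n1) := by
      rw [lintegral_const]; simp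
    rw [← hconst]
    apply lintegral_le_of_lmarginal_le U hg0prodmeas measurable_const
    rw [lmarginal_const_fn]
    have hg0dep : ∀ (x : δ → ℝ) (y : ∀ _ : U, ℝ), g0 (updateFinset x U y) = g0 x := by
      intro x y
      rw [hg0]
      have : ∑ i, (updateFinset x U y (gI i))^2 = ∑ i, (x (gI i))^2 := by
        apply Finset.sum_congr rfl
        intro i _
        rw [updFin_not_mem (hgU i)]
      simp only [this]
    rw [lmarginal_mul_left U hprodmeas hg0dep]
    have hdisj' : ∀ j ∈ J, ∀ j' ∈ J, j ≠ j' → Disjoint (t j) (t j') := by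
      intro j hj j' hj' hne
      rw [Finset.disjoint_left]
      intro a haj haj'
      rw [ht] at haj haj'
      simp only [Finset.mem_image, Finset.mem_univ, true_and] at haj haj'
      obtain ⟨i, hi⟩ := haj
      obtain ⟨i', hi'⟩ := haj'
      exact hdisj i i' j j' hj hj' hne (hi.trans hi'.symm)
    have hdep : ∀ j ∈ J, ∀ x y : δ → ℝ,
        (∀ i, i ∉ U \ (t j) → x i = y i) → F j x = F j y := by
      intro j hj x y hagree
      rw [hF]
      have hsame : ∀ i, x (gI i) * x (xI i j) = y (gI i) * y (xI i j) := by
        intro i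
        have h1 : x (gI i) = y (gI i) := hagree _ (fun hmem => hgU i (Finset.mem_sdiff.mp hmem).1)
        have h2 : x (xI i j) = y (xI i j) := by
          apply hagree
          intro hmem
          apply (Finset.mem_sdiff.mp hmem).2
          rw [ht]
          exact Finset.mem_image.mpr ⟨i, Finset.mem_univ i, rfl⟩
        rw [h1, h2]
      simp only [hsame]
    rw [lmarginal_prod_groups J t hdisj' F hFm hdep]
    intro x
    dsimp only
    by_cases hG : ∑ i, (x (gI i))^2 ≤ 4*(m:ℝ)
    · have hg0x : g0 x = 1 := by rw [hg0]; simp only [hG, if_true]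
      rw [hg0x, one_mul]
      have hfac : ∀ j ∈ J, (∫⋯∫⁻_(t j), F j ∂(G δ)) x ≤ ENNReal.ofReal (Real.sqrt 2) := by
        intro j hj
        have hsumim : ∀ z : δ → ℝ, ∑ k ∈ t j, (x (gI (p k))) * z k
            = ∑ i, x (gI i) * z (xI i j) := by
          intro z
          rw [ht]
          rw [Finset.sum_image (fun i _ i' _ h => hxinj j h)]
          apply Finset.sum_congr rfl
          intro i _
          rw [hp]
        have hsumsq : ∑ k ∈ t j, (x (gI (p k)))^2 = ∑ i, (x (gI i))^2 := by
          rw [ht, Finset.sum_image (fun i _ i' _ h => hxinj j h)]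
          apply Finset.sum_congr rfl
          intro i _
          rw [hp]
        have hxtj : ∀ i, gI i ∉ t j := by
          intro i hmem
          rw [ht] at hmem
          simp only [Finset.mem_image, Finset.mem_univ, true_and] at hmem
          obtain ⟨i', hi'⟩ := hmem
          exact hgx i i' j hj hi'.symm
        have hswitch : (∫⋯∫⁻_(t j), F j ∂(G δ)) x
            = (∫⋯∫⁻_(t j), (fun z => ENNReal.ofReal (Real.exp (lam *
                (∑ k ∈ t j, (fun k => x (gI (p k))) k * z k)^2))) ∂(G δ)) x := by
          apply lmarginal_point
          intro y
          simp only [hF]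
          have h1 : ∑ i, updateFinset x (t j) y (gI i) * updateFinset x (t j) y (xI i j)
              = ∑ k ∈ t j, (x (gI (p k))) * updateFinset x (t j) y k := by
            rw [hsumim (updateFinset x (t j) y)]
            apply Finset.sum_congr rfl
            intro i _
            rw [updFin_not_mem (hxtj i)]
          rw [h1]
        rw [hswitch]
        have hcond : 2 * lam * ∑ k ∈ t j, ((fun k => x (gI (p k))) k)^2 < 1 := by
          simp only []
          rw [hsumsq]
          have : 2 * lam * ∑ i, (x (gI i))^2 ≤ 2 * lam * (4*(m:ℝ)) := by
            apply mul_le_mul_of_nonneg_left hG (by positivity)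
          have h2 : 2 * lam * (4*(m:ℝ)) = 1/2 := by
            rw [hlam_def]; field_simp; ring
          linarith
        rw [gaussMarginal lam hlam _ (t j) hcond (t j) (Finset.Subset.refl _) x]
        rw [Finset.sdiff_self, Finset.sum_empty]
        norm_num
        apply inv_sqrt_le
        rw [hsumsq]
        have hnn : (0:ℝ) ≤ ∑ i, (x (gI i))^2 := Finset.sum_nonneg fun i _ => sq_nonneg _
        have h2 : 2 * lam * (4*(m:ℝ)) = 1/2 := by
          rw [hlam_def]; field_simp; ring
        nlinarith [mul_le_mul_of_nonneg_left hG (by positivity : (0:ℝ) ≤ 2 * lam)]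
      calc ∏ j ∈ J, (∫⋯∫⁻_(t j), F j ∂(G δ)) x
          ≤ ∏ _j ∈ J, ENNReal.ofReal (Real.sqrt 2) := Finset.prod_le_prod' hfac
      _ = (ENNReal.ofReal (Real.sqrt 2))^J.card := Finset.prod_const _
      _ ≤ (ENNReal.ofReal (Real.sqrt 2))^n1 := by
          apply pow_le_pow_right₀
          · rw [← ENNReal.ofReal_one]
            apply ENNReal.ofReal_le_ofReal
            rw [show (1:ℝ) = Real.sqrt 1 from Real.sqrt_one.symm]
            exact Real.sqrt_le_sqrt (by norm_num)
          · calc J.card ≤ Fintype.card (Fin n1) := Finset.card_le_univ J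
            _ = n1 := Fintype.card_fin n1
      _ = ENNReal.ofReal ((Real.sqrt 2)^n1) := by
          rw [ENNReal.ofReal_pow (Real.sqrt_nonneg 2)]
    · have hg0x : g0 x = 0 := by rw [hg0]; simp only [hG, if_false]
      rw [hg0x, zero_mul]
      exact bot_le
  calc Measure.pi (G δ) {x : δ → ℝ | (∑ i, (x (gI i))^2 ≤ 4*(m:ℝ)) ∧
        16*(n1:ℝ)*m < ∑ j ∈ J, (∑ i, x (gI i) * x (xI i j))^2}
      ≤ ∫⁻ x, ENNReal.ofReal (Real.exp (-(n1:ℝ))) * (g0 x * ∏ j ∈ J, F j x)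
          ∂Measure.pi (G δ) := step1
  _ = ENNReal.ofReal (Real.exp (-(n1:ℝ))) *
        ∫⁻ x, (g0 x * ∏ j ∈ J, F j x) ∂Measure.pi (G δ) :=
      lintegral_const_mul _ hg0prodmeas
  _ ≤ ENNReal.ofReal (Real.exp (-(n1:ℝ))) * ENNReal.ofReal ((Real.sqrt 2)^n1) :=
      mul_le_mul_right step3 _
  _ = ENNReal.ofReal (Real.exp (-(n1:ℝ)) * (Real.sqrt 2)^n1) :=
      (ENNReal.ofReal_mul (Real.exp_nonneg _)).symm
  _ ≤ ENNReal.ofReal (Real.exp (-(n1:ℝ)/2)) := ENNReal.ofReal_le_ofReal (real_bound n1)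

end ALSHelp

end Helpers


/-- The auxiliary measurement matrices `Ã_i` obtained from `A_i` by resampling the first row
and first column (except the (1,1) entry) using `Â_i`. -/
def Atil {n1 n2 m : ℕ} (A Ahat : Fin m → Matrix (Fin n1) (Fin n2) ℝ) (i : Fin m) :
    Matrix (Fin n1) (Fin n2) ℝ :=
  Matrix.of fun j k =>
    if ((j : ℕ) ≠ 0 ∧ (k : ℕ) ≠ 0) ∨ ((j : ℕ) = 0 ∧ (k : ℕ) = 0) then A i j k else Ahat i j k

section MatLemmas
set_option maxHeartbeats 1000000

-- helper lemmas
lemma ofE_e1_apply (n : ℕ) (i : Fin n) : ofE (e1 n) i = if (i:ℕ) = 0 then 1 else 0 := rfl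
lemma toE_apply {n : ℕ} (f : Fin n → ℝ) (i : Fin n) : toE f i = f i := rfl

variable {n1 n2 m : ℕ}

lemma ent11_eq (hn1 : 0 < n1) (hn2 : 0 < n2) (M : Matrix (Fin n1) (Fin n2) ℝ) :
    ent11 M = M ⟨0,hn1⟩ ⟨0,hn2⟩ := by
  unfold ent11 frobInner
  simp only [vecMulVec_apply, ofE_e1_apply]
  rw [Finset.sum_eq_single (⟨0,hn1⟩ : Fin n1)]
  · rw [Finset.sum_eq_single (⟨0,hn2⟩ : Fin n2)]
    · simp
    · intro b _ hb
      have : (b:ℕ) ≠ 0 := fun h => hb (Fin.ext h)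
      simp [this]
    · intro h; exact absurd (Finset.mem_univ _) h
  · intro b _ hb
    have : (b:ℕ) ≠ 0 := fun h => hb (Fin.ext h)
    simp [this]
  · intro h; exact absurd (Finset.mem_univ _) h

lemma mulVec_e1 (hn2 : 0 < n2) (X : Matrix (Fin n1) (Fin n2) ℝ) (j : Fin n1) :
    (X *ᵥ ofE (e1 n2)) j = X j ⟨0,hn2⟩ := by
  rw [Matrix.mulVec, dotProduct]
  simp only [ofE_e1_apply]
  rw [Finset.sum_eq_single (⟨0,hn2⟩ : Fin n2)]
  · simp
  · intro b _ hb
    have : (b:ℕ) ≠ 0 := fun h => hb (Fin.ext h)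
    simp [this]
  · intro h; exact absurd (Finset.mem_univ _) h

lemma omat_entry (hn1 : 0 < n1) (hn2 : 0 < n2) (M : Matrix (Fin n1) (Fin n2) ℝ) (j : Fin n1) :
    Omat M j ⟨0,hn2⟩ = if (j:ℕ) = 0 then 0 else M j ⟨0,hn2⟩ := by
  unfold Omat
  rw [Matrix.add_apply]
  have hterm1 : ((vecMulVec (ofE (e1 n1)) (ofE (e1 n1)) * M *
      (1 - vecMulVec (ofE (e1 n2)) (ofE (e1 n2)))) : Matrix (Fin n1) (Fin n2) ℝ) j ⟨0,hn2⟩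
      = 0 := by
    rw [Matrix.mul_apply]
    apply Finset.sum_eq_zero
    intro l _
    have : (1 - vecMulVec (ofE (e1 n2)) (ofE (e1 n2))) l ⟨0,hn2⟩ = 0 := by
      rw [Matrix.sub_apply, Matrix.one_apply, vecMulVec_apply, ofE_e1_apply, ofE_e1_apply]
      by_cases hl : (l:ℕ) = 0
      · have : l = (⟨0,hn2⟩ : Fin n2) := Fin.ext hl
        simp [this]
      · have : l ≠ (⟨0,hn2⟩ : Fin n2) := fun h => hl (by rw [h])
        simp [this, hl]
    rw [this, mul_zero]
  have hterm2 : (((1 - vecMulVec (ofE (e1 n1)) (ofE (e1 n1))) * M *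
      vecMulVec (ofE (e1 n2)) (ofE (e1 n2))) : Matrix (Fin n1) (Fin n2) ℝ) j ⟨0,hn2⟩
      = M j ⟨0,hn2⟩ - (if (j:ℕ) = 0 then 1 else 0) * M ⟨0,hn1⟩ ⟨0,hn2⟩ := by
    rw [Matrix.mul_apply]
    have he2 : ofE (e1 n2) (⟨0,hn2⟩ : Fin n2) = 1 := by simp [ofE_e1_apply]
    rw [Finset.sum_eq_single (⟨0,hn2⟩ : Fin n2)]
    · rw [vecMulVec_apply, he2, mul_one, mul_one]
      rw [Matrix.mul_apply]
      rw [Finset.sum_eq_single j]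
      · rw [Matrix.sub_apply, Matrix.one_apply_eq, vecMulVec_apply, ofE_e1_apply]
        by_cases hj : (j:ℕ) = 0
        · have hj' : j = (⟨0,hn1⟩ : Fin n1) := Fin.ext hj
          rw [hj']
          simp
        · simp [hj]
      · intro b _ hb
        rw [Matrix.sub_apply, Matrix.one_apply_ne (Ne.symm hb), vecMulVec_apply,
          ofE_e1_apply, ofE_e1_apply]
        by_cases hj : (j:ℕ) = 0
        · by_cases hbv : (b:ℕ) = 0
          · exact absurd (Fin.ext (hj.trans hbv.symm) : j = b) (Ne.symm hb)
          · simp [hbv]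
        · simp [hj]
      · intro h; exact absurd (Finset.mem_univ _) h
    · intro b _ hb
      have : (b:ℕ) ≠ 0 := fun h => hb (Fin.ext h)
      rw [vecMulVec_apply, ofE_e1_apply, ofE_e1_apply]
      simp [this]
    · intro h; exact absurd (Finset.mem_univ _) h
  rw [hterm1, hterm2, zero_add]
  by_cases hj : (j:ℕ) = 0
  · have hj' : j = (⟨0,hn1⟩ : Fin n1) := Fin.ext hj
    simp [hj, hj']
  · simp [hj]

lemma norm_bound (hn1 : 0 < n1) (hn2 : 0 < n2) (hm : 0 < m)
    (B C : Fin m → Matrix (Fin n1) (Fin n2) ℝ)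
    (h : ∑ j ∈ Finset.univ.filter (fun j : Fin n1 => j ≠ ⟨0,hn1⟩),
        (∑ i, B i ⟨0,hn1⟩ ⟨0,hn2⟩ * C i j ⟨0,hn2⟩)^2 ≤ 16*(n1:ℝ)*m) :
    (1/(m:ℝ)) * ‖toE ((∑ i, ent11 (B i) • Omat (C i)) *ᵥ ofE (e1 n2))‖
      ≤ 4 * Real.sqrt ((n1:ℝ)/m) := by
  have hmR : (0:ℝ) < m := Nat.cast_pos.mpr hm
  set v : Fin n1 → ℝ := (∑ i, ent11 (B i) • Omat (C i)) *ᵥ ofE (e1 n2) with hv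
  have hvj : ∀ j : Fin n1, v j = if (j:ℕ) = 0 then 0
      else ∑ i, B i ⟨0,hn1⟩ ⟨0,hn2⟩ * C i j ⟨0,hn2⟩ := by
    intro j
    rw [hv, mulVec_e1 hn2]
    rw [Matrix.sum_apply]
    by_cases hj : (j:ℕ) = 0
    · rw [if_pos hj]
      apply Finset.sum_eq_zero
      intro i _
      rw [Matrix.smul_apply, omat_entry hn1 hn2, if_pos hj, smul_zero]
    · rw [if_neg hj]
      apply Finset.sum_congr rfl
      intro i _
      rw [Matrix.smul_apply, omat_entry hn1 hn2, if_neg hj, ent11_eq hn1 hn2, smul_eq_mul]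
  have hnorm : ‖toE v‖ = Real.sqrt (∑ j, (v j)^2) := by
    rw [EuclideanSpace.norm_eq]
    congr 1
    apply Finset.sum_congr rfl
    intro j _
    rw [toE_apply, Real.norm_eq_abs, sq_abs]
  have hsum : ∑ j, (v j)^2 ≤ 16*(n1:ℝ)*m := by
    rw [← Finset.sum_filter_add_sum_filter_not Finset.univ (fun j : Fin n1 => j ≠ ⟨0,hn1⟩)]
    have h2 : ∑ j ∈ Finset.univ.filter (fun j : Fin n1 => ¬ j ≠ ⟨0,hn1⟩), (v j)^2 = 0 := by
      apply Finset.sum_eq_zero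
      intro j hj
      rw [Finset.mem_filter] at hj
      have : j = ⟨0,hn1⟩ := not_not.mp hj.2
      rw [hvj, this, if_pos rfl]
      norm_num
    have h1 : ∑ j ∈ Finset.univ.filter (fun j : Fin n1 => j ≠ ⟨0,hn1⟩), (v j)^2
        = ∑ j ∈ Finset.univ.filter (fun j : Fin n1 => j ≠ ⟨0,hn1⟩),
            (∑ i, B i ⟨0,hn1⟩ ⟨0,hn2⟩ * C i j ⟨0,hn2⟩)^2 := by
      apply Finset.sum_congr rfl
      intro j hj
      rw [Finset.mem_filter] at hj
      have : (j:ℕ) ≠ 0 := fun hc => hj.2 (Fin.ext hc)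
      rw [hvj, if_neg this]
    rw [h1, h2, add_zero]
    exact h
  have hker : ‖toE v‖ ≤ 4 * Real.sqrt ((n1:ℝ)*m) := by
    rw [hnorm]
    calc Real.sqrt (∑ j, (v j)^2) ≤ Real.sqrt (16*(n1:ℝ)*m) := Real.sqrt_le_sqrt hsum
    _ = 4 * Real.sqrt ((n1:ℝ)*m) := by
        rw [show (16:ℝ)*n1*m = 4^2*((n1:ℝ)*m) by ring, Real.sqrt_mul (by positivity),
          Real.sqrt_sq (by norm_num)]
  have hfinal : Real.sqrt ((n1:ℝ)/m) = Real.sqrt ((n1:ℝ)*m) / m := by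
    rw [show (n1:ℝ)/m = ((n1:ℝ)*m)/(m^2) by field_simp,
      Real.sqrt_div (by positivity), Real.sqrt_sq hmR.le]
  calc (1/(m:ℝ)) * ‖toE v‖ ≤ (1/(m:ℝ)) * (4 * Real.sqrt ((n1:ℝ)*m)) := by
        apply mul_le_mul_of_nonneg_left hker (by positivity)
  _ = 4 * (Real.sqrt ((n1:ℝ)*m) / m) := by ring
  _ = 4 * Real.sqrt ((n1:ℝ)/m) := by rw [hfinal]


end MatLemmas

/-- Lemma `randombound1`. -/
theorem statement4 :
    ∃ C c : ℝ, 0 < C ∧ 0 < c ∧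
      ∀ (n1 n2 m : ℕ), 0 < n1 → 0 < n2 → 0 < m →
      ∀ (Ω : Type) (_ : MeasurableSpace Ω) (μ : Measure Ω), IsProbabilityMeasure μ →
      ∀ (A Ahat : Ω → Fin m → Matrix (Fin n1) (Fin n2) ℝ),
      (Measure.map
          (fun ω (p : (Fin m × Fin n1 × Fin n2) ⊕ (Fin m × Fin n1 × Fin n2)) =>
            Sum.elim (fun q : Fin m × Fin n1 × Fin n2 => A ω q.1 q.2.1 q.2.2)
              (fun q : Fin m × Fin n1 × Fin n2 => Ahat ω q.1 q.2.1 q.2.2) p) μ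
        = Measure.pi fun _ => gaussianReal 0 1) →
      μ {ω |
          (1 / (m : ℝ)) * ‖toE ((∑ i, ent11 (A ω i) • Omat (A ω i)) *ᵥ ofE (e1 n2))‖
            ≤ 4 * Real.sqrt (n1 / m) ∧
          (1 / (m : ℝ)) *
              ‖toE ((∑ i, ent11 (A ω i) • Omat (Atil (A ω) (Ahat ω) i)) *ᵥ ofE (e1 n2))‖
            ≤ 4 * Real.sqrt (n1 / m)}
        ≥ ENNReal.ofReal (1 - C * Real.exp (-c * min (m : ℝ) (min (n1 : ℝ) (n2 : ℝ)))) := by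
  classical
  refine ⟨4, 1/2, by norm_num, by norm_num, ?_⟩
  intro n1 n2 m hn1 hn2 hm Ω mΩ μ hμ A Ahat hmap
  haveI := mΩ
  haveI := hμ
  set ν : Measure (((Fin m × Fin n1 × Fin n2) ⊕ (Fin m × Fin n1 × Fin n2)) → ℝ) :=
    Measure.pi fun _ => gaussianReal 0 1 with hν
  haveI : IsProbabilityMeasure ν := by unfold ν; infer_instance
  set F : Ω → (((Fin m × Fin n1 × Fin n2) ⊕ (Fin m × Fin n1 × Fin n2)) → ℝ) :=
    fun ω (p : (Fin m × Fin n1 × Fin n2) ⊕ (Fin m × Fin n1 × Fin n2)) =>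
      Sum.elim (fun q : Fin m × Fin n1 × Fin n2 => A ω q.1 q.2.1 q.2.2)
        (fun q : Fin m × Fin n1 × Fin n2 => Ahat ω q.1 q.2.1 q.2.2) p with hF
  have hAE : AEMeasurable F μ := by
    by_contra hc
    rw [Measure.map_of_not_aemeasurable hc] at hmap
    have h0 := congrArg (fun (τ : Measure _) => τ Set.univ) hmap
    simp only [Measure.coe_zero, Pi.zero_apply] at h0
    rw [measure_univ] at h0
    exact zero_ne_one h0
  set gI : Fin m → ((Fin m × Fin n1 × Fin n2) ⊕ (Fin m × Fin n1 × Fin n2)) :=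
    fun i => Sum.inl (i, ⟨0,hn1⟩, ⟨0,hn2⟩) with hgI
  set xI1 : Fin m → Fin n1 → ((Fin m × Fin n1 × Fin n2) ⊕ (Fin m × Fin n1 × Fin n2)) :=
    fun i j => Sum.inl (i, j, ⟨0,hn2⟩) with hxI1
  set xI2 : Fin m → Fin n1 → ((Fin m × Fin n1 × Fin n2) ⊕ (Fin m × Fin n1 × Fin n2)) :=
    fun i j => Sum.inr (i, j, ⟨0,hn2⟩) with hxI2
  set J : Finset (Fin n1) := Finset.univ.filter (fun j => j ≠ ⟨0,hn1⟩) with hJ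
  set SB : Set ((((Fin m × Fin n1 × Fin n2) ⊕ (Fin m × Fin n1 × Fin n2))) → ℝ) :=
    {x | (∑ j ∈ J, (∑ i, x (gI i) * x (xI1 i j))^2 ≤ 16*(n1:ℝ)*m)
      ∧ (∑ j ∈ J, (∑ i, x (gI i) * x (xI2 i j))^2 ≤ 16*(n1:ℝ)*m)} with hSB
  have hQ1meas : Measurable (fun x : (((Fin m × Fin n1 × Fin n2) ⊕ (Fin m × Fin n1 × Fin n2))) → ℝ
      => ∑ j ∈ J, (∑ i, x (gI i) * x (xI1 i j))^2) := by fun_prop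
  have hQ2meas : Measurable (fun x : (((Fin m × Fin n1 × Fin n2) ⊕ (Fin m × Fin n1 × Fin n2))) → ℝ
      => ∑ j ∈ J, (∑ i, x (gI i) * x (xI2 i j))^2) := by fun_prop
  have hGmeas : Measurable (fun x : (((Fin m × Fin n1 × Fin n2) ⊕ (Fin m × Fin n1 × Fin n2))) → ℝ
      => ∑ i, (x (gI i))^2) := by fun_prop
  have hSBmeas : MeasurableSet SB := by
    rw [hSB]
    exact (measurableSet_le hQ1meas measurable_const).inter
      (measurableSet_le hQ2meas measurable_const)
  -- inclusion of events
  have hincl : F ⁻¹' SB ⊆ {ω |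
      (1 / (m : ℝ)) * ‖toE ((∑ i, ent11 (A ω i) • Omat (A ω i)) *ᵥ ofE (e1 n2))‖
        ≤ 4 * Real.sqrt (n1 / m) ∧
      (1 / (m : ℝ)) *
          ‖toE ((∑ i, ent11 (A ω i) • Omat (Atil (A ω) (Ahat ω) i)) *ᵥ ofE (e1 n2))‖
        ≤ 4 * Real.sqrt (n1 / m)} := by
    intro ω hω
    have hω1 : ∑ j ∈ J, (∑ i, F ω (gI i) * F ω (xI1 i j))^2 ≤ 16*(n1:ℝ)*m := hω.1
    have hω2 : ∑ j ∈ J, (∑ i, F ω (gI i) * F ω (xI2 i j))^2 ≤ 16*(n1:ℝ)*m := hω.2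
    constructor
    · apply norm_bound hn1 hn2 hm (A ω) (A ω)
      exact hω1
    · apply norm_bound hn1 hn2 hm (A ω) (Atil (A ω) (Ahat ω))
      have heq : ∀ j ∈ J, (∑ i, A ω i ⟨0,hn1⟩ ⟨0,hn2⟩ * Atil (A ω) (Ahat ω) i j ⟨0,hn2⟩)
          = ∑ i, F ω (gI i) * F ω (xI2 i j) := by
        intro j hj
        have hjv : (j:ℕ) ≠ 0 := by
          rw [hJ, Finset.mem_filter] at hj
          exact fun hc => hj.2 (Fin.ext hc)
        apply Finset.sum_congr rfl
        intro i _
        have hA : Atil (A ω) (Ahat ω) i j ⟨0,hn2⟩ = Ahat ω i j ⟨0,hn2⟩ := by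
          show (if ((j:ℕ) ≠ 0 ∧ ((⟨0,hn2⟩ : Fin n2):ℕ) ≠ 0) ∨
              ((j:ℕ) = 0 ∧ ((⟨0,hn2⟩ : Fin n2):ℕ) = 0)
            then A ω i j ⟨0,hn2⟩ else Ahat ω i j ⟨0,hn2⟩) = Ahat ω i j ⟨0,hn2⟩
          have : ¬ (((j:ℕ) ≠ 0 ∧ ((⟨0,hn2⟩ : Fin n2):ℕ) ≠ 0) ∨
              ((j:ℕ) = 0 ∧ ((⟨0,hn2⟩ : Fin n2):ℕ) = 0)) := by
            simp [hjv]
          rw [if_neg this]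
        rw [hA]
        rfl
      rw [show (∑ j ∈ Finset.univ.filter (fun j : Fin n1 => j ≠ ⟨0,hn1⟩),
          (∑ i, A ω i ⟨0,hn1⟩ ⟨0,hn2⟩ * Atil (A ω) (Ahat ω) i j ⟨0,hn2⟩)^2)
          = ∑ j ∈ J, (∑ i, F ω (gI i) * F ω (xI2 i j))^2 from
        Finset.sum_congr rfl (fun j hj => by rw [heq j hj])]
      exact hω2
  -- complement bound
  have hginj : Function.Injective gI := by
    intro i i' h
    rw [hgI] at h
    simpa using h
  have hp : ∀ (i : Fin m) (j : Fin n1),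
      (Sum.elim (fun q : Fin m × Fin n1 × Fin n2 => q.1)
        (fun q : Fin m × Fin n1 × Fin n2 => q.1)) (xI1 i j) = i := fun i j => rfl
  have hp2 : ∀ (i : Fin m) (j : Fin n1),
      (Sum.elim (fun q : Fin m × Fin n1 × Fin n2 => q.1)
        (fun q : Fin m × Fin n1 × Fin n2 => q.1)) (xI2 i j) = i := fun i j => rfl
  have hdisj1 : ∀ (i i' : Fin m) (j j' : Fin n1), j ∈ J → j' ∈ J → j ≠ j' →
      xI1 i j ≠ xI1 i' j' := by
    intro i i' j j' _ _ hne h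
    rw [hxI1] at h
    simp only [Sum.inl.injEq, Prod.mk.injEq] at h
    exact hne h.2.1
  have hdisj2 : ∀ (i i' : Fin m) (j j' : Fin n1), j ∈ J → j' ∈ J → j ≠ j' →
      xI2 i j ≠ xI2 i' j' := by
    intro i i' j j' _ _ hne h
    rw [hxI2] at h
    simp only [Sum.inr.injEq, Prod.mk.injEq] at h
    exact hne h.2.1
  have hgx1 : ∀ (i i' : Fin m), ∀ j ∈ J, gI i ≠ xI1 i' j := by
    intro i i' j hj h
    rw [hgI, hxI1] at h
    simp only [Sum.inl.injEq, Prod.mk.injEq] at h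
    rw [hJ, Finset.mem_filter] at hj
    exact hj.2 h.2.1.symm
  have hgx2 : ∀ (i i' : Fin m), ∀ j ∈ J, gI i ≠ xI2 i' j := by
    intro i i' j hj h
    rw [hgI, hxI2] at h
    simp at h
  have hcompl : ν SBᶜ ≤ ENNReal.ofReal (Real.exp (-(m:ℝ)/2)) +
      (ENNReal.ofReal (Real.exp (-(n1:ℝ)/2)) + ENNReal.ofReal (Real.exp (-(n1:ℝ)/2))) := by
    have hsub : SBᶜ ⊆ {x | 4*(m:ℝ) < ∑ i, (x (gI i))^2}
        ∪ ({x | (∑ i, (x (gI i))^2 ≤ 4*(m:ℝ)) ∧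
              16*(n1:ℝ)*m < ∑ j ∈ J, (∑ i, x (gI i) * x (xI1 i j))^2}
          ∪ {x | (∑ i, (x (gI i))^2 ≤ 4*(m:ℝ)) ∧
              16*(n1:ℝ)*m < ∑ j ∈ J, (∑ i, x (gI i) * x (xI2 i j))^2}) := by
      intro x hx
      rw [Set.mem_compl_iff, hSB, Set.mem_setOf_eq, not_and_or] at hx
      by_cases hG : ∑ i, (x (gI i))^2 ≤ 4*(m:ℝ)
      · right
        rcases hx with h | h
        · left; exact ⟨hG, not_le.mp h⟩
        · right; exact ⟨hG, not_le.mp h⟩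
      · left
        exact not_le.mp hG
    calc ν SBᶜ ≤ ν ({x | 4*(m:ℝ) < ∑ i, (x (gI i))^2}
        ∪ ({x | (∑ i, (x (gI i))^2 ≤ 4*(m:ℝ)) ∧
              16*(n1:ℝ)*m < ∑ j ∈ J, (∑ i, x (gI i) * x (xI1 i j))^2}
          ∪ {x | (∑ i, (x (gI i))^2 ≤ 4*(m:ℝ)) ∧
              16*(n1:ℝ)*m < ∑ j ∈ J, (∑ i, x (gI i) * x (xI2 i j))^2})) :=
          measure_mono hsub
    _ ≤ ν {x | 4*(m:ℝ) < ∑ i, (x (gI i))^2}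
        + ν ({x | (∑ i, (x (gI i))^2 ≤ 4*(m:ℝ)) ∧
              16*(n1:ℝ)*m < ∑ j ∈ J, (∑ i, x (gI i) * x (xI1 i j))^2}
          ∪ {x | (∑ i, (x (gI i))^2 ≤ 4*(m:ℝ)) ∧
              16*(n1:ℝ)*m < ∑ j ∈ J, (∑ i, x (gI i) * x (xI2 i j))^2}) := measure_union_le _ _
    _ ≤ ν {x | 4*(m:ℝ) < ∑ i, (x (gI i))^2}
        + (ν {x | (∑ i, (x (gI i))^2 ≤ 4*(m:ℝ)) ∧
              16*(n1:ℝ)*m < ∑ j ∈ J, (∑ i, x (gI i) * x (xI1 i j))^2}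
          + ν {x | (∑ i, (x (gI i))^2 ≤ 4*(m:ℝ)) ∧
              16*(n1:ℝ)*m < ∑ j ∈ J, (∑ i, x (gI i) * x (xI2 i j))^2}) :=
          add_le_add_right (measure_union_le _ _) _
    _ ≤ ENNReal.ofReal (Real.exp (-(m:ℝ)/2)) +
        (ENNReal.ofReal (Real.exp (-(n1:ℝ)/2)) + ENNReal.ofReal (Real.exp (-(n1:ℝ)/2))) := by
        refine add_le_add ?_ (add_le_add ?_ ?_)
        · exact ALSHelp.gBound m hm gI hginj
        · exact ALSHelp.chiBound m n1 hm gI J xI1 _ hp hdisj1 hgx1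
        · exact ALSHelp.chiBound m n1 hm gI J xI2 _ hp2 hdisj2 hgx2
  -- final arithmetic
  have hr : Real.exp (-(m:ℝ)/2) + (Real.exp (-(n1:ℝ)/2) + Real.exp (-(n1:ℝ)/2))
      ≤ 4 * Real.exp (-(1/2) * min (m:ℝ) (min (n1:ℝ) (n2:ℝ))) := by
    have hmin_m : min (m:ℝ) (min (n1:ℝ) (n2:ℝ)) ≤ m := min_le_left _ _
    have hmin_n1 : min (m:ℝ) (min (n1:ℝ) (n2:ℝ)) ≤ n1 :=
      le_trans (min_le_right _ _) (min_le_left _ _)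
    have e1' : Real.exp (-(m:ℝ)/2) ≤ Real.exp (-(1/2) * min (m:ℝ) (min (n1:ℝ) (n2:ℝ))) :=
      Real.exp_le_exp.mpr (by linarith)
    have e2' : Real.exp (-(n1:ℝ)/2) ≤ Real.exp (-(1/2) * min (m:ℝ) (min (n1:ℝ) (n2:ℝ))) :=
      Real.exp_le_exp.mpr (by linarith)
    nlinarith [Real.exp_pos (-(1/2) * min (m:ℝ) (min (n1:ℝ) (n2:ℝ)))]
  have hcompl' : ν SBᶜ ≤ ENNReal.ofReal (4 * Real.exp (-(1/2) * min (m:ℝ) (min (n1:ℝ) (n2:ℝ)))) := by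
    refine le_trans hcompl ?_
    rw [← ENNReal.ofReal_add (by positivity) (by positivity),
      ← ENNReal.ofReal_add (by positivity) (by positivity)]
    exact ENNReal.ofReal_le_ofReal hr
  have hSBge : ENNReal.ofReal (1 - 4 * Real.exp (-(1/2) * min (m:ℝ) (min (n1:ℝ) (n2:ℝ))))
      ≤ ν SB := by
    have h1 : ν SBᶜ = 1 - ν SB := prob_compl_eq_one_sub hSBmeas
    have h2 : ν SB = 1 - ν SBᶜ := by
      rw [h1, ENNReal.sub_sub_cancel ENNReal.one_ne_top prob_le_one]
    rw [h2]
    calc ENNReal.ofReal (1 - 4 * Real.exp (-(1/2) * min (m:ℝ) (min (n1:ℝ) (n2:ℝ))))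
        = ENNReal.ofReal 1 -
          ENNReal.ofReal (4 * Real.exp (-(1/2) * min (m:ℝ) (min (n1:ℝ) (n2:ℝ)))) :=
          ENNReal.ofReal_sub _ (by positivity)
    _ = 1 - ENNReal.ofReal (4 * Real.exp (-(1/2) * min (m:ℝ) (min (n1:ℝ) (n2:ℝ)))) := by
          rw [ENNReal.ofReal_one]
    _ ≤ 1 - ν SBᶜ := tsub_le_tsub_left hcompl' 1
  have hmap' : ν SB = μ (F ⁻¹' SB) := by
    rw [← hmap]
    exact Measure.map_apply_of_aemeasurable hAE hSBmeas
  calc ENNReal.ofReal (1 - 4 * Real.exp (-(1/2) * min (m:ℝ) (min (n1:ℝ) (n2:ℝ))))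
      ≤ ν SB := hSBge
  _ = μ (F ⁻¹' SB) := hmap'
  _ ≤ μ {ω |
      (1 / (m : ℝ)) * ‖toE ((∑ i, ent11 (A ω i) • Omat (A ω i)) *ᵥ ofE (e1 n2))‖
        ≤ 4 * Real.sqrt (n1 / m) ∧
      (1 / (m : ℝ)) *
          ‖toE ((∑ i, ent11 (A ω i) • Omat (Atil (A ω) (Ahat ω) i)) *ᵥ ofE (e1 n2))‖
        ≤ 4 * Real.sqrt (n1 / m)} := measure_mono hincl


end ALSPaper
end
end
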